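/- arXiv:1211.3732 — 3 statements merged into one kernel-verified Lean document; each statement's English description precedes it below -/
import Mathlib

section
/- Let d ≥ 1 be an integer, δ ∈ (0,1) and K₀ ≥ 0. Let H(u', u'', t, x), with u' ∈ ℝ^{d+1}, u'' a symmetric d×d matrix, (t,x) ∈ ℝ × ℝ^d, be a real-valued function that is Lipschitz continuous in u'' and such that at every point of differentiability of H with respect to u'' the derivative, represented as a symmetric matrix a via w ↦ tr(a w), belongs to 𝕊_δ. Suppose that H̄₊ := sup over (u',t,x) of ( max(H(u',0,t,x),0) − K₀|u'| ) is finite. Then there is a constant κ > 0 depending only on δ and d such that for all u = (u',u'') and (t,x): H(u,t,x) ≤ P₀(u'') − κ‖u''‖_F + K₀|u'| + H̄₊, where ‖u''‖_F is the Frobenius norm of u''. -/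
open scoped BigOperators NNReal

attribute [local instance] Matrix.frobeniusNormedAddCommGroup Matrix.frobeniusNormedSpace

noncomputable section

/-- `𝕊_θ`: symmetric `d×d` matrices with `θ|ξ|² ≤ ⟨aξ,ξ⟩ ≤ θ⁻¹|ξ|²`. -/
def Sdelta (d : ℕ) (θ : ℝ) : Set (Matrix (Fin d) (Fin d) ℝ) :=
  {a | a.IsHermitian ∧ ∀ ξ : Fin d → ℝ,
    θ * (∑ i, ξ i ^ 2) ≤ (∑ i, ∑ j, a i j * ξ j * ξ i) ∧
      (∑ i, ∑ j, a i j * ξ j * ξ i) ≤ θ⁻¹ * (∑ i, ξ i ^ 2)}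

/-- Frobenius norm of a matrix. -/
def frobNorm (d : ℕ) (M : Matrix (Fin d) (Fin d) ℝ) : ℝ :=
  Real.sqrt (∑ i, ∑ j, (M i j) ^ 2)

/-- Euclidean norm of a vector. -/
def eunorm {n : ℕ} (u : Fin n → ℝ) : ℝ :=
  Real.sqrt (∑ i, u i ^ 2)

/-- Pucci's operator `P₀(M) = 2δ⁻¹ Σ λ_k⁺(M) − (δ/2) Σ λ_k⁻(M)` (for Hermitian `M`;
junk value `0` otherwise). -/
def pucci (d : ℕ) (δ : ℝ) (M : Matrix (Fin d) (Fin d) ℝ) : ℝ :=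
  if h : M.IsHermitian then
    2 * δ⁻¹ * (∑ k, max (h.eigenvalues k) 0) - (δ / 2) * (∑ k, max (-(h.eigenvalues k)) 0)
  else 0

namespace KrylovAux

open MeasureTheory intervalIntegral Filter
open scoped Topology


variable {d : ℕ} {M : Matrix (Fin d) (Fin d) ℝ}

/-- entry formula for `star U * a * U`. -/
lemma entry_formula (hM : M.IsHermitian) (a : Matrix (Fin d) (Fin d) ℝ) (k : Fin d) :
    ((star (hM.eigenvectorUnitary : Matrix (Fin d) (Fin d) ℝ)) * a *
      (hM.eigenvectorUnitary : Matrix (Fin d) (Fin d) ℝ)) k k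
      = ∑ i, ∑ j, a i j * ((hM.eigenvectorUnitary : Matrix (Fin d) (Fin d) ℝ) j k)
          * ((hM.eigenvectorUnitary : Matrix (Fin d) (Fin d) ℝ) i k) := by
  set U := (hM.eigenvectorUnitary : Matrix (Fin d) (Fin d) ℝ) with hU
  simp only [Matrix.mul_apply, Matrix.star_apply, star_trivial, Finset.sum_mul]
  rw [Finset.sum_comm]
  refine Finset.sum_congr rfl fun i _ => Finset.sum_congr rfl fun j _ => by ring

lemma col_norm_one (hM : M.IsHermitian) (k : Fin d) :
    ∑ i, ((hM.eigenvectorUnitary : Matrix (Fin d) (Fin d) ℝ) i k) ^ 2 = 1 := by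
  set U := (hM.eigenvectorUnitary : Matrix (Fin d) (Fin d) ℝ) with hU
  have h : star U * U = 1 := Matrix.mem_unitaryGroup_iff'.mp (hM.eigenvectorUnitary).2
  have := congrFun (congrFun h k) k
  simpa [Matrix.mul_apply, Matrix.star_apply, Matrix.one_apply, sq] using this

/-- `tr (a M) = ∑ λ_k * q_k` where `q_k` is the quadratic form of `a` at the k-th column. -/
lemma trace_mul_spectral (hM : M.IsHermitian) (a : Matrix (Fin d) (Fin d) ℝ) :
    Matrix.trace (a * M) = ∑ k, hM.eigenvalues k *
      ((star (hM.eigenvectorUnitary : Matrix (Fin d) (Fin d) ℝ)) * a *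
        (hM.eigenvectorUnitary : Matrix (Fin d) (Fin d) ℝ)) k k := by
  set U := (hM.eigenvectorUnitary : Matrix (Fin d) (Fin d) ℝ) with hU
  have hspec : M = U * Matrix.diagonal hM.eigenvalues * star U := by
    have := hM.spectral_theorem
    simpa [RCLike.ofReal_real_eq_id] using this
  calc Matrix.trace (a * M) = Matrix.trace (a * (U * Matrix.diagonal hM.eigenvalues * star U)) := by
        rw [← hspec]
    _ = Matrix.trace ((star U * a * U) * Matrix.diagonal hM.eigenvalues) := by
        rw [show a * (U * Matrix.diagonal hM.eigenvalues * star U)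
            = (a * U * Matrix.diagonal hM.eigenvalues) * star U by noncomm_ring,
          Matrix.trace_mul_comm]
        congr 1; noncomm_ring
    _ = ∑ k, hM.eigenvalues k * ((star U * a * U) k k) := by
        simp [Matrix.trace, Matrix.diag, Matrix.mul_diagonal, mul_comm]



variable {d : ℕ} {M : Matrix (Fin d) (Fin d) ℝ}

lemma quad_eq_eigen (hM : M.IsHermitian) (k : Fin d) :
    ((star (hM.eigenvectorUnitary : Matrix (Fin d) (Fin d) ℝ)) * M *
      (hM.eigenvectorUnitary : Matrix (Fin d) (Fin d) ℝ)) k k = hM.eigenvalues k := by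
  set U := (hM.eigenvectorUnitary : Matrix (Fin d) (Fin d) ℝ) with hU
  have h1 : star U * U = 1 := Matrix.mem_unitaryGroup_iff'.mp (hM.eigenvectorUnitary).2
  have hspec : M = U * Matrix.diagonal hM.eigenvalues * star U := by
    have := hM.spectral_theorem
    simpa [RCLike.ofReal_real_eq_id] using this
  have : star U * M * U = Matrix.diagonal hM.eigenvalues := by
    conv_lhs => rw [hspec]
    calc star U * (U * Matrix.diagonal hM.eigenvalues * star U) * U
        = (star U * U) * Matrix.diagonal hM.eigenvalues * (star U * U) := by noncomm_ring
      _ = Matrix.diagonal hM.eigenvalues := by rw [h1, one_mul, mul_one]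
  rw [this, Matrix.diagonal_apply_eq]

lemma trace_mul_le (hM : M.IsHermitian) {δ : ℝ} (hδ0 : 0 < δ)
    {a : Matrix (Fin d) (Fin d) ℝ} (ha : a ∈ Sdelta d δ) :
    Matrix.trace (a * M) ≤
      ∑ k, (δ⁻¹ * max (hM.eigenvalues k) 0 - δ * max (-(hM.eigenvalues k)) 0) := by
  rw [trace_mul_spectral hM a]
  refine Finset.sum_le_sum fun k _ => ?_
  set U := (hM.eigenvectorUnitary : Matrix (Fin d) (Fin d) ℝ) with hU
  set c := ((star U) * a * U) k k with hc
  have hcf : c = ∑ i, ∑ j, a i j * U j k * U i k := entry_formula hM a k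
  obtain ⟨hlb, hub⟩ := ha.2 (fun i => U i k)
  have hcn : ∑ i, U i k ^ 2 = 1 := col_norm_one hM k
  simp only [hcn, mul_one] at hlb hub
  rw [← hcf] at hlb hub
  rcases le_or_gt 0 (hM.eigenvalues k) with hk | hk
  · rw [max_eq_left hk, max_eq_right (by linarith), mul_zero, sub_zero, mul_comm]
    exact mul_le_mul_of_nonneg_right hub hk
  · rw [max_eq_right hk.le, max_eq_left (by linarith), mul_zero, zero_sub]
    have : hM.eigenvalues k * c ≤ hM.eigenvalues k * δ :=
      mul_le_mul_of_nonpos_left hlb hk.le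
    linarith

lemma frob_le_sum_eigen (hM : M.IsHermitian) :
    frobNorm d M ≤ ∑ k, (max (hM.eigenvalues k) 0 + max (-(hM.eigenvalues k)) 0) := by
  have hsq : ∑ i, ∑ j, M i j ^ 2 = ∑ k, hM.eigenvalues k ^ 2 := by
    have h1 : Matrix.trace (M * M) = ∑ k, hM.eigenvalues k ^ 2 := by
      rw [trace_mul_spectral hM M]
      exact Finset.sum_congr rfl fun k _ => by rw [quad_eq_eigen hM k, sq]
    have h2 : Matrix.trace (M * M) = ∑ i, ∑ j, M i j ^ 2 := by
      simp only [Matrix.trace, Matrix.diag, Matrix.mul_apply]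
      refine Finset.sum_congr rfl fun i _ => Finset.sum_congr rfl fun j _ => ?_
      have : M j i = M i j := by
        have := congrFun (congrFun hM i) j
        simpa [Matrix.conjTranspose_apply] using this
      rw [this, sq]
    rw [← h1, h2]
  rw [frobNorm, hsq]
  have habs : ∀ k : Fin d, |hM.eigenvalues k| =
      max (hM.eigenvalues k) 0 + max (-(hM.eigenvalues k)) 0 := by
    intro k
    rcases le_total 0 (hM.eigenvalues k) with h | h
    · rw [abs_of_nonneg h, max_eq_left h, max_eq_right (by linarith), add_zero]
    · rw [abs_of_nonpos h, max_eq_right h, max_eq_left (by linarith), zero_add]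
  calc Real.sqrt (∑ k, hM.eigenvalues k ^ 2)
      ≤ Real.sqrt ((∑ k, |hM.eigenvalues k|) ^ 2) := by
        apply Real.sqrt_le_sqrt
        have := Finset.sum_sq_le_sq_sum_of_nonneg
          (f := fun k => |hM.eigenvalues k|) (s := Finset.univ) (fun i _ => abs_nonneg _)
        simpa [sq_abs] using this
    _ = ∑ k, |hM.eigenvalues k| :=
        Real.sqrt_sq (Finset.sum_nonneg fun k _ => abs_nonneg _)
    _ = _ := Finset.sum_congr rfl fun k _ => habs k


/-- 1-D: a Lipschitz function whose derivative (where it exists, a.e.) is `≤ B`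
increases by at most `B` from `0` to `1`. -/
lemma lipschitz_incr_le {g : ℝ → ℝ} {K : ℝ≥0} (hg : LipschitzWith K g) {B : ℝ}
    (h : ∀ᵐ t : ℝ, ∃ c : ℝ, c ≤ B ∧ HasDerivAt g c t) : g 1 - g 0 ≤ B := by
  have hgc : Continuous g := hg.continuous
  set hn : ℕ → ℝ := fun n => 1 / (n + 1) with hhn
  have hnpos : ∀ n, 0 < hn n := fun n => by positivity
  have hn0 : Tendsto hn atTop (𝓝 0) := tendsto_one_div_add_atTop_nhds_zero_nat
  set F : ℕ → ℝ → ℝ := fun n t => (g (t + hn n) - g t) / hn n with hF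
  -- uniform bound on slopes
  have hFbd : ∀ n t, |F n t| ≤ (K : ℝ) := by
    intro n t
    rw [hF, abs_div, abs_of_pos (hnpos n)]
    rw [div_le_iff₀ (hnpos n)]
    have := hg.dist_le_mul (t + hn n) t
    simpa [Real.dist_eq, abs_of_pos (hnpos n)] using this
  -- a.e. convergence of slopes to deriv g, with deriv g ≤ B and |deriv g| ≤ K
  have hae : ∀ᵐ t : ℝ, Tendsto (fun n => F n t) atTop (𝓝 (deriv g t))
      ∧ deriv g t ≤ B ∧ |deriv g t| ≤ (K : ℝ) := by
    filter_upwards [h] with t ⟨c, hcB, hc⟩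
    have hd : deriv g t = c := hc.deriv
    have hslope : Tendsto (slope g t) (𝓝[≠] t) (𝓝 c) :=
      hasDerivAt_iff_tendsto_slope.mp hc
    have hseq : Tendsto (fun n => t + hn n) atTop (𝓝[≠] t) := by
      apply tendsto_nhdsWithin_of_tendsto_nhds_of_eventually_within
      · simpa using tendsto_const_nhds.add hn0
      · exact Eventually.of_forall fun n => by
          simp only [Set.mem_compl_iff, Set.mem_singleton_iff]
          have := hnpos n; intro hcon; nlinarith [hcon]
    have hT : Tendsto (fun n => F n t) atTop (𝓝 c) := by
      have := hslope.comp hseq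
      refine this.congr fun n => ?_
      simp [slope, hF, Function.comp, div_eq_inv_mul]
    refine ⟨by rwa [hd], by rwa [hd], ?_⟩
    rw [hd]
    have habs : Tendsto (fun n => |F n t|) atTop (𝓝 |c|) := hT.abs
    exact le_of_tendsto habs (Eventually.of_forall fun n => hFbd n t)
  -- the measure
  set μ : Measure ℝ := volume.restrict (Set.Ioc (0:ℝ) 1) with hμ
  have hμfin : IsFiniteMeasure μ := by
    rw [hμ]; constructor; simp [Measure.restrict_apply]
  -- dominated convergence
  have hFcont : ∀ n, Continuous (F n) := fun n =>
    ((hgc.comp (continuous_id.add continuous_const)).sub hgc).div_const _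
  have hderiv_meas : AEStronglyMeasurable (deriv g) μ :=
    (measurable_deriv g).aestronglyMeasurable
  have hDCT : Tendsto (fun n => ∫ t, F n t ∂μ) atTop (𝓝 (∫ t, deriv g t ∂μ)) := by
    refine tendsto_integral_of_dominated_convergence (fun _ => (K : ℝ))
      (fun n => (hFcont n).aestronglyMeasurable) (integrable_const _)
      (fun n => Eventually.of_forall fun t => by
        simpa [Real.norm_eq_abs] using hFbd n t) ?_
    exact (ae_restrict_of_ae hae).mono fun t ht => ht.1
  -- the limit integral is ≤ B
  have hintB : ∫ t, deriv g t ∂μ ≤ B := by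
    have hint : Integrable (deriv g) μ := by
      refine Integrable.mono' (integrable_const (K : ℝ)) hderiv_meas ?_
      exact (ae_restrict_of_ae hae).mono fun t ht => by
        simpa [Real.norm_eq_abs] using ht.2.2
    calc ∫ t, deriv g t ∂μ ≤ ∫ _t, B ∂μ := by
          refine integral_mono_ae hint (integrable_const _) ?_
          exact (ae_restrict_of_ae hae).mono fun t ht => ht.2.1
      _ = B := by simp [hμ, Measure.restrict_apply]
  -- compute ∫ F n
  have hgint : ∀ a b : ℝ, IntervalIntegrable g volume a b := fun a b =>
    hgc.intervalIntegrable a b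
  have hμeq : ∀ n, ∫ t, F n t ∂μ =
      ((∫ t in (1:ℝ)..(1 + hn n), g t) - ∫ t in (0:ℝ)..(hn n), g t) / hn n := by
    intro n
    have h1 : ∫ t, F n t ∂μ = ∫ t in (0:ℝ)..1, F n t := by
      rw [hμ, integral_of_le (by norm_num)]
    rw [h1]
    have h2 : ∫ t in (0:ℝ)..1, F n t
        = ((∫ t in (0:ℝ)..1, g (t + hn n)) - ∫ t in (0:ℝ)..1, g t) / hn n := by
      rw [hF]
      rw [intervalIntegral.integral_div]
      congr 1
      exact intervalIntegral.integral_sub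
        ((hgc.comp (continuous_id.add continuous_const)).intervalIntegrable _ _) (hgint 0 1)
    rw [h2, intervalIntegral.integral_comp_add_right g (hn n)]
    congr 1
    have hch1 : (∫ t in (0 + hn n:ℝ)..1, g t) + ∫ t in (1:ℝ)..(1 + hn n), g t
        = ∫ t in (0 + hn n:ℝ)..(1 + hn n), g t :=
      integral_add_adjacent_intervals (hgint _ _) (hgint _ _)
    have hch2 : (∫ t in (0:ℝ)..(hn n), g t) + ∫ t in (hn n:ℝ)..1, g t
        = ∫ t in (0:ℝ)..1, g t :=
      integral_add_adjacent_intervals (hgint _ _) (hgint _ _)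
    have : (0:ℝ) + hn n = hn n := by ring
    rw [this] at hch1 ⊢
    linarith [hch1, hch2]
  -- error bound: |∫ F n − (g 1 − g 0)| ≤ 2 K hn
  have herr : ∀ n, |(∫ t, F n t ∂μ) - (g 1 - g 0)| ≤ 2 * K * hn n := by
    intro n
    have e1 : |(∫ t in (1:ℝ)..(1 + hn n), g t) - hn n * g 1| ≤ (K : ℝ) * hn n * hn n := by
      have : (∫ t in (1:ℝ)..(1 + hn n), g t) - hn n * g 1
          = ∫ t in (1:ℝ)..(1 + hn n), (g t - g 1) := by
        rw [intervalIntegral.integral_sub (hgint _ _) (intervalIntegrable_const)]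
        simp [intervalIntegral.integral_const]
      rw [this]
      have := intervalIntegral.norm_integral_le_of_norm_le_const (C := (K:ℝ) * hn n)
        (f := fun t => g t - g 1) (a := 1) (b := 1 + hn n) ?_
      · rw [Real.norm_eq_abs] at this
        calc |∫ t in (1:ℝ)..(1 + hn n), (g t - g 1)| ≤ (K:ℝ) * hn n * |1 + hn n - 1| := this
          _ = (K:ℝ) * hn n * hn n := by
              have hp := hnpos n
              have : |1 + hn n - 1| = hn n := by
                rw [show (1:ℝ) + hn n - 1 = hn n by ring, abs_of_pos hp]
              rw [this]
      · intro x hx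
        rw [Set.uIoc_of_le (by linarith [hnpos n])] at hx
        have h1 : dist (g x) (g 1) ≤ K * dist x 1 := hg.dist_le_mul x 1
        rw [Real.dist_eq, Real.dist_eq] at h1
        have : |x - 1| ≤ hn n := by
          obtain ⟨hx1, hx2⟩ := hx
          rw [abs_of_pos (by linarith)]
          linarith
        calc ‖g x - g 1‖ = |g x - g 1| := rfl
          _ ≤ K * |x - 1| := h1
          _ ≤ (K:ℝ) * hn n := by
              exact mul_le_mul_of_nonneg_left this K.coe_nonneg
    have e2 : |(∫ t in (0:ℝ)..(hn n), g t) - hn n * g 0| ≤ (K : ℝ) * hn n * hn n := by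
      have : (∫ t in (0:ℝ)..(hn n), g t) - hn n * g 0
          = ∫ t in (0:ℝ)..(hn n), (g t - g 0) := by
        rw [intervalIntegral.integral_sub (hgint _ _) (intervalIntegrable_const)]
        simp [intervalIntegral.integral_const]
      rw [this]
      have hb : ∀ x ∈ Set.uIoc (0:ℝ) (hn n), ‖g x - g 0‖ ≤ (K:ℝ) * hn n := by
        intro x hx
        rw [Set.uIoc_of_le (hnpos n).le] at hx
        have h1 : dist (g x) (g 0) ≤ K * dist x 0 := hg.dist_le_mul x 0
        rw [Real.dist_eq, Real.dist_eq, sub_zero] at h1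
        have hxb : |x| ≤ hn n := by
          obtain ⟨hx1, hx2⟩ := hx
          rw [abs_of_pos hx1]; exact hx2
        calc ‖g x - g 0‖ = |g x - g 0| := rfl
          _ ≤ K * |x| := h1
          _ ≤ (K:ℝ) * hn n := mul_le_mul_of_nonneg_left hxb K.coe_nonneg
      have := intervalIntegral.norm_integral_le_of_norm_le_const hb
      rw [Real.norm_eq_abs] at this
      calc |∫ t in (0:ℝ)..(hn n), (g t - g 0)| ≤ (K:ℝ) * hn n * |hn n - 0| := this
        _ = (K:ℝ) * hn n * hn n := by rw [sub_zero, abs_of_pos (hnpos n)]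
    rw [hμeq n]
    have hp := hnpos n
    rw [show ((∫ t in (1:ℝ)..(1 + hn n), g t) - ∫ t in (0:ℝ)..(hn n), g t) / hn n - (g 1 - g 0)
        = (((∫ t in (1:ℝ)..(1 + hn n), g t) - hn n * g 1)
          - ((∫ t in (0:ℝ)..(hn n), g t) - hn n * g 0)) / hn n by field_simp; ring]
    rw [abs_div, abs_of_pos hp, div_le_iff₀ hp]
    calc |((∫ t in (1:ℝ)..(1 + hn n), g t) - hn n * g 1)
          - ((∫ t in (0:ℝ)..(hn n), g t) - hn n * g 0)|
        ≤ |(∫ t in (1:ℝ)..(1 + hn n), g t) - hn n * g 1|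
          + |(∫ t in (0:ℝ)..(hn n), g t) - hn n * g 0| := abs_sub _ _
      _ ≤ (K:ℝ) * hn n * hn n + (K:ℝ) * hn n * hn n := add_le_add e1 e2
      _ = 2 * K * hn n * hn n := by ring
  -- conclude
  have hlim2 : Tendsto (fun n => ∫ t, F n t ∂μ) atTop (𝓝 (g 1 - g 0)) := by
    rw [tendsto_iff_dist_tendsto_zero]
    refine squeeze_zero (g := fun n => 2 * (K:ℝ) * hn n) (fun n => dist_nonneg)
      (fun n => by rw [Real.dist_eq]; exact herr n) ?_
    have : Tendsto (fun n => 2 * (K:ℝ) * hn n) atTop (𝓝 (2 * (K:ℝ) * 0)) := hn0.const_mul _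
    simpa using this
  have hfin : g 1 - g 0 = ∫ t, deriv g t ∂μ := tendsto_nhds_unique hlim2 hDCT
  rw [hfin]; exact hintB


/-- If `f : E → ℝ` is Lipschitz and at every differentiability point the directional
derivative along `v` is `≤ B`, then `f v - f 0 ≤ B`. -/
lemma shift_bound {E : Type*} [NormedAddCommGroup E] [NormedSpace ℝ E] [FiniteDimensional ℝ E]
    [MeasurableSpace E] [BorelSpace E] (μ : Measure E) [μ.IsAddHaarMeasure]
    {f : E → ℝ} {K : ℝ≥0} (hf : LipschitzWith K f) (v : E) {B : ℝ}
    (hB : ∀ p : E, DifferentiableAt ℝ f p → fderiv ℝ f p v ≤ B) :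
    f v - f 0 ≤ B := by
  -- the non-differentiability set is measurable and null
  set N : Set E := {p | ¬ DifferentiableAt ℝ f p} with hN
  have hNmeas : MeasurableSet N := (measurableSet_of_differentiableAt ℝ f).compl
  have hNnull : μ N = 0 := by
    have := hf.ae_differentiableAt (μ := μ)
    simpa [hN, ae_iff] using this
  -- Fubini: for a.e. x, for a.e. t, x + t • v is a differentiability point
  have hmap : Measurable fun q : ℝ × E => q.2 + q.1 • v :=
    (measurable_snd.add (measurable_fst.smul_const v))
  set S' : Set (ℝ × E) := (fun q : ℝ × E => q.2 + q.1 • v) ⁻¹' N with hS'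
  have hS'meas : MeasurableSet S' := hmap hNmeas
  have hS'null : (volume.prod μ) S' = 0 := by
    rw [Measure.measure_prod_null hS'meas]
    refine Eventually.of_forall fun t => ?_
    show μ (Prod.mk t ⁻¹' S') = 0
    have h3 : (Prod.mk t ⁻¹' S') = (fun x : E => x + t • v) ⁻¹' N := rfl
    rw [h3]
    have : (fun x : E => x + t • v) ⁻¹' N = (fun x : E => t • v + x) ⁻¹' N := by
      ext x; simp [add_comm]
    rw [this, measure_preimage_add]
    exact hNnull
  have hae : ∀ᵐ x ∂μ, ∀ᵐ t : ℝ, DifferentiableAt ℝ f (x + t • v) := by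
    set S : Set (E × ℝ) := Prod.swap ⁻¹' S' with hS
    have hSnull : (μ.prod volume) S = 0 := by
      have : (μ.prod volume) S = (Measure.map Prod.swap (μ.prod volume)) S' := by
        rw [Measure.map_apply measurable_swap hS'meas]
      rw [this, Measure.prod_swap]; exact hS'null
    have : ∀ᵐ z : E × ℝ ∂μ.prod volume, z ∉ S := by
      rw [ae_iff]; simpa using hSnull
    have h2 := Measure.ae_ae_of_ae_prod this
    filter_upwards [h2] with x hx
    filter_upwards [hx] with t ht
    simpa [hS, hS', hN] using ht
  -- conclude by choosing x arbitrarily small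
  refine le_of_forall_pos_le_add fun ε hε => ?_
  set ε' : ℝ := ε / (2 * K + 1) with hε'
  have hε'pos : 0 < ε' := by positivity
  -- pick a good x in the ball of radius ε'
  have hball : μ (Metric.ball (0:E) ε') ≠ 0 := (Metric.measure_ball_pos μ 0 hε'pos).ne'
  obtain ⟨x, hxball, hxgood⟩ :
      ∃ x, x ∈ Metric.ball (0:E) ε' ∧ ∀ᵐ t : ℝ, DifferentiableAt ℝ f (x + t • v) := by
    by_contra hcon
    push_neg at hcon
    apply hball
    refine measure_mono_null (fun x hx => ?_) (by simpa [ae_iff] using hae : μ {x | ¬ ∀ᵐ t : ℝ, DifferentiableAt ℝ f (x + t • v)} = 0)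
    exact Filter.not_eventually.mpr (hcon x hx)
  -- the 1-D function
  set g : ℝ → ℝ := fun t => f (x + t • v) with hg
  have hgl : LipschitzWith (K * ‖v‖₊) g := by
    have hline : LipschitzWith ‖v‖₊ (fun t : ℝ => x + t • v) := by
      refine LipschitzWith.of_dist_le_mul fun s t => ?_
      simp only [dist_eq_norm]
      rw [show x + s • v - (x + t • v) = (s - t) • v by module, norm_smul]
      simp [Real.norm_eq_abs, Real.dist_eq, mul_comm]
    exact hf.comp hline
  have hder : ∀ᵐ t : ℝ, ∃ c : ℝ, c ≤ B ∧ HasDerivAt g c t := by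
    filter_upwards [hxgood] with t ht
    refine ⟨fderiv ℝ f (x + t • v) v, hB _ ht, ?_⟩
    have hline : HasDerivAt (fun s : ℝ => x + s • v) v t := by
      simpa using ((hasDerivAt_id t).smul_const v).const_add x
    exact ht.hasFDerivAt.comp_hasDerivAt t hline
  have h1 := lipschitz_incr_le hgl hder
  -- g 1 = f (x + v), g 0 = f x
  have hg1 : g 1 = f (x + v) := by simp [hg]
  have hg0 : g 0 = f x := by simp [hg]
  rw [hg1, hg0] at h1
  have hxn : ‖x‖ < ε' := by simpa using hxball
  have e1 : |f v - f (x + v)| ≤ K * ‖x‖ := by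
    have := hf.dist_le_mul v (x + v)
    rw [dist_eq_norm, dist_eq_norm] at this
    simpa [show v - (x + v) = -x by abel, norm_neg] using this
  have e2 : |f x - f 0| ≤ K * ‖x‖ := by
    have := hf.dist_le_mul x 0
    rw [dist_eq_norm, dist_eq_norm] at this
    simpa using this
  have hKx : (K:ℝ) * ‖x‖ ≤ K * ε' := mul_le_mul_of_nonneg_left hxn.le K.coe_nonneg
  have habs1 := abs_le.mp e1
  have habs2 := abs_le.mp e2
  have hfin : 2 * (K:ℝ) * ε' ≤ ε := by
    have h2K : (0:ℝ) < 2 * K + 1 := by positivity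
    have hq : ε' * (2 * K + 1) = ε := by rw [hε']; field_simp
    nlinarith [hε'pos.le]
  nlinarith [habs1.1, habs1.2, habs2.1, habs2.2, h1, hKx]


lemma frobNorm_nonneg (d : ℕ) (X : Matrix (Fin d) (Fin d) ℝ) : 0 ≤ frobNorm d X :=
  Real.sqrt_nonneg _

lemma frobNorm_le_of_entries {d : ℕ} {X : Matrix (Fin d) (Fin d) ℝ} {c : ℝ}
    (hc : 0 ≤ c) (h : ∀ i j, |X i j| ≤ c) : frobNorm d X ≤ d * c := by
  have h1 : ∑ i, ∑ j, X i j ^ 2 ≤ (d : ℝ) * d * c ^ 2 := by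
    calc ∑ i, ∑ j, X i j ^ 2 ≤ ∑ _i : Fin d, ∑ _j : Fin d, c ^ 2 := by
          refine Finset.sum_le_sum fun i _ => Finset.sum_le_sum fun j _ => ?_
          have := abs_le.mp (h i j)
          nlinarith [this.1, this.2]
      _ = (d : ℝ) * d * c ^ 2 := by
          rw [Finset.sum_const, Finset.sum_const, Finset.card_univ, Fintype.card_fin,
            nsmul_eq_mul, nsmul_eq_mul]
          ring
  calc frobNorm d X ≤ Real.sqrt ((d:ℝ) * d * c ^ 2) := Real.sqrt_le_sqrt h1
    _ = d * c := by
        rw [show (d:ℝ) * d * c ^ 2 = (d * c)^2 by ring]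
        exact Real.sqrt_sq (by positivity)

lemma herm_entry {d : ℕ} {X : Matrix (Fin d) (Fin d) ℝ} (hX : X.IsHermitian) (i j : Fin d) :
    X j i = X i j := by
  have := congrFun (congrFun hX i) j
  simpa [Matrix.conjTranspose_apply] using this

end KrylovAux

open KrylovAux MeasureTheory

set_option maxHeartbeats 2000000

/-- Inequality (9.29.2) of Lemma 3.2 of Krylov, "An ersatz existence theorem for
fully nonlinear parabolic equations without convexity assumptions":
`H ≤ P₀ − κ‖u''‖_F + K₀|u'| + H̄₊` with `κ > 0` depending only on `δ` and `d`.
The finite supremum `H̄₊` is expressed through an arbitrary upper bound `Hbarp`. -/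
theorem H_le_pucci_sub_kappa (d : ℕ) (hd : 1 ≤ d) (δ : ℝ) (hδ : δ ∈ Set.Ioo (0:ℝ) 1) :
    ∃ κ : ℝ, 0 < κ ∧
      ∀ (K₀ : ℝ), 0 ≤ K₀ →
      ∀ (H : (Fin (d + 1) → ℝ) → Matrix (Fin d) (Fin d) ℝ → ℝ → (Fin d → ℝ) → ℝ),
        -- Lipschitz continuity of `H` in `u''`
        (∃ C : ℝ, ∀ (u' : Fin (d + 1) → ℝ) (t : ℝ) (x : Fin d → ℝ)
            (y y' : Matrix (Fin d) (Fin d) ℝ), y.IsHermitian → y'.IsHermitian →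
            |H u' y t x - H u' y' t x| ≤ C * frobNorm d (y - y')) →
        -- at points of differentiability in `u''` the derivative lies in `𝕊_δ`
        (∀ (u' : Fin (d + 1) → ℝ) (t : ℝ) (x : Fin d → ℝ)
            (M : Matrix (Fin d) (Fin d) ℝ) (f' : Matrix (Fin d) (Fin d) ℝ →L[ℝ] ℝ),
            M.IsHermitian →
            HasFDerivWithinAt (fun y => H u' y t x) f' {A | A.IsHermitian} M →
            ∃ a ∈ Sdelta d δ, ∀ w : Matrix (Fin d) (Fin d) ℝ, w.IsHermitian →
              f' w = Matrix.trace (a * w)) →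
      ∀ (Hbarp : ℝ),
        -- `H̄₊ = sup (H⁺(u',0,t,x) − K₀|u'|)` is finite, bounded by `Hbarp`
        (∀ (u' : Fin (d + 1) → ℝ) (t : ℝ) (x : Fin d → ℝ),
            max (H u' 0 t x) 0 - K₀ * eunorm u' ≤ Hbarp) →
      ∀ (u' : Fin (d + 1) → ℝ) (M : Matrix (Fin d) (Fin d) ℝ), M.IsHermitian →
        ∀ (t : ℝ) (x : Fin d → ℝ),
          H u' M t x ≤ pucci d δ M - κ * frobNorm d M + K₀ * eunorm u' + Hbarp := by
  obtain ⟨hδ0, hδ1⟩ := hδ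
  refine ⟨δ / 2, by positivity, ?_⟩
  intro K₀ hK₀ H ⟨C, hC⟩ hDer Hbarp hHbar u' M hM t x
  -- the symmetrization projection
  set G : Matrix (Fin d) (Fin d) ℝ → Matrix (Fin d) (Fin d) ℝ :=
    fun A => Matrix.of (fun i j => (A i j + A j i) / 2) with hG
  have hGherm : ∀ A, (G A).IsHermitian := by
    intro A
    show Matrix.conjTranspose (G A) = G A
    ext i j
    simp [hG, Matrix.conjTranspose_apply]
    ring
  have hGid : ∀ A : Matrix (Fin d) (Fin d) ℝ, A.IsHermitian → G A = A := by
    intro A hA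
    ext i j
    simp [hG, herm_entry hA i j]
  -- the auxiliary Lipschitz function on the pi space
  set F : (Fin d → Fin d → ℝ) → ℝ := fun p => H u' (G (Matrix.of p)) t x with hF
  set Cd : ℝ≥0 := Real.toNNReal (max C 0 * d) with hCd
  have hCdco : (Cd : ℝ) = max C 0 * d := Real.coe_toNNReal _ (by positivity)
  have hGdiff : ∀ p q : Fin d → Fin d → ℝ,
      G (Matrix.of p) - G (Matrix.of q) = G (Matrix.of (p - q)) := by
    intro p q; ext i j
    simp [hG]
    ring
  have hFlip : LipschitzWith Cd F := by
    refine LipschitzWith.of_dist_le_mul fun p q => ?_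
    have step1 : dist (F p) (F q) ≤ C * frobNorm d (G (Matrix.of p) - G (Matrix.of q)) := by
      rw [Real.dist_eq]
      exact hC u' t x _ _ (hGherm _) (hGherm _)
    have hentry : ∀ i j, |(G (Matrix.of p) - G (Matrix.of q)) i j| ≤ dist p q := by
      intro i j
      rw [hGdiff]
      have h1 : ∀ a b, |(p - q) a b| ≤ dist p q := by
        intro a b
        rw [dist_eq_norm]
        exact (norm_le_pi_norm ((p - q) a) b).trans (norm_le_pi_norm (p - q) a)
      have := h1 i j
      have h2 := h1 j i
      simp only [hG, Matrix.sub_apply, Matrix.of_apply]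
      rw [abs_div]
      rw [div_le_iff₀ (by norm_num : (0:ℝ) < |2|)]
      calc |Matrix.of (p - q) i j + Matrix.of (p - q) j i|
          ≤ |Matrix.of (p - q) i j| + |Matrix.of (p - q) j i| := abs_add_le _ _
        _ ≤ dist p q + dist p q := add_le_add this h2
        _ = dist p q * |2| := by rw [abs_two]; ring
    have step2 : frobNorm d (G (Matrix.of p) - G (Matrix.of q)) ≤ d * dist p q :=
      frobNorm_le_of_entries dist_nonneg hentry
    calc dist (F p) (F q) ≤ C * frobNorm d (G (Matrix.of p) - G (Matrix.of q)) := step1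
      _ ≤ max C 0 * frobNorm d (G (Matrix.of p) - G (Matrix.of q)) :=
          mul_le_mul_of_nonneg_right (le_max_left _ _) (frobNorm_nonneg _ _)
      _ ≤ max C 0 * (d * dist p q) :=
          mul_le_mul_of_nonneg_left step2 (le_max_right _ _)
      _ = Cd * dist p q := by rw [hCdco]; ring
  -- the sublinear bound
  set Bψ : ℝ := ∑ k, (δ⁻¹ * max (hM.eigenvalues k) 0 - δ * max (-(hM.eigenvalues k)) 0) with hBψ
  -- the direction
  set v₀ : Fin d → Fin d → ℝ := fun i j => M i j with hv₀
  -- the inclusion continuous linear map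
  set Tl : Matrix (Fin d) (Fin d) ℝ →ₗ[ℝ] (Fin d → Fin d → ℝ) :=
    { toFun := fun A i j => A i j, map_add' := fun _ _ => rfl, map_smul' := fun _ _ => rfl }
      with hTl
  set T : Matrix (Fin d) (Fin d) ℝ →L[ℝ] (Fin d → Fin d → ℝ) :=
    LinearMap.toContinuousLinearMap Tl with hT
  have hTapp : ∀ (A : Matrix (Fin d) (Fin d) ℝ) i j, T A i j = A i j := fun _ _ _ => rfl
  -- directional derivative bound at differentiability points
  have hdir : ∀ p : Fin d → Fin d → ℝ, DifferentiableAt ℝ F p → fderiv ℝ F p v₀ ≤ Bψ := by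
    intro p hp
    set M₀ : Matrix (Fin d) (Fin d) ℝ := G (Matrix.of p) with hM₀
    set L : Matrix (Fin d) (Fin d) ℝ →L[ℝ] ℝ := (fderiv ℝ F p).comp T with hL
    have hΦ : HasFDerivAt (fun A : Matrix (Fin d) (Fin d) ℝ => F (T A + (p - T M₀))) L M₀ := by
      have haff : HasFDerivAt (fun A : Matrix (Fin d) (Fin d) ℝ => T A + (p - T M₀)) T M₀ :=
        (T.hasFDerivAt).add_const _
      have heval : T M₀ + (p - T M₀) = p := by abel
      have := HasFDerivAt.comp (x := M₀) (g' := fderiv ℝ F p) (f' := (T : _ →L[ℝ] _))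
        (by rw [heval]; exact hp.hasFDerivAt) haff
      exact this
    have hagree : ∀ A ∈ {A : Matrix (Fin d) (Fin d) ℝ | A.IsHermitian},
        H u' A t x = F (T A + (p - T M₀)) := by
      intro A hA
      have : G (Matrix.of (T A + (p - T M₀))) = A := by
        ext i j
        have hMij : M₀ i j = (p i j + p j i) / 2 := rfl
        have hMji : M₀ j i = (p j i + p i j) / 2 := rfl
        simp only [hG, Matrix.of_apply, Pi.add_apply, Pi.sub_apply, hTapp]
        rw [herm_entry hA i j, hMij, hMji]
        ring
      rw [hF]
      simp only []
      rw [this]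
    have hWithin : HasFDerivWithinAt (fun y => H u' y t x) L
        {A : Matrix (Fin d) (Fin d) ℝ | A.IsHermitian} M₀ :=
      (hΦ.hasFDerivWithinAt).congr hagree (hagree M₀ (hGherm _))
    obtain ⟨a, ha, hrep⟩ := hDer u' t x M₀ L (hGherm _) hWithin
    have hTv : T M = v₀ := rfl
    have : fderiv ℝ F p v₀ = L M := by
      rw [hL, ContinuousLinearMap.comp_apply, hTv]
    rw [this, hrep M hM]
    exact trace_mul_le hM hδ0 ha
  -- apply the shift bound
  have hshift := shift_bound (E := Fin d → Fin d → ℝ) volume hFlip v₀ hdir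
  have hFv : F v₀ = H u' M t x := by
    rw [hF]
    simp only []
    congr 1
    exact hGid _ hM
  have hF0 : F 0 = H u' 0 t x := by
    rw [hF]
    simp only []
    congr 1
    ext i j
    simp [hG]
  rw [hFv, hF0] at hshift
  -- bound H u' 0 t x
  have h0 : H u' 0 t x ≤ K₀ * eunorm u' + Hbarp := by
    have := hHbar u' t x
    have h2 : H u' 0 t x ≤ max (H u' 0 t x) 0 := le_max_left _ _
    linarith
  -- bound Bψ by pucci
  have hpB : Bψ ≤ pucci d δ M - (δ / 2) * frobNorm d M := by
    rw [pucci, dif_pos hM]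
    have hsum : Bψ = δ⁻¹ * (∑ k, max (hM.eigenvalues k) 0)
        - δ * (∑ k, max (-(hM.eigenvalues k)) 0) := by
      rw [hBψ, Finset.sum_sub_distrib, Finset.mul_sum, Finset.mul_sum]
    have hfrob := frob_le_sum_eigen hM
    rw [Finset.sum_add_distrib] at hfrob
    set P := ∑ k, max (hM.eigenvalues k) 0 with hP
    set Q := ∑ k, max (-(hM.eigenvalues k)) 0 with hQ
    have hPpos : 0 ≤ P := Finset.sum_nonneg fun k _ => le_max_right _ _
    have hQpos : 0 ≤ Q := Finset.sum_nonneg fun k _ => le_max_right _ _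
    have hinv : δ * δ⁻¹ = 1 := mul_inv_cancel₀ hδ0.ne'
    rw [hsum]
    have hhalf : δ / 2 ≤ δ⁻¹ := by nlinarith
    nlinarith [frobNorm_nonneg d M, mul_le_mul_of_nonneg_left hfrob (by positivity : (0:ℝ) ≤ δ/2),
      mul_le_mul_of_nonneg_right hhalf hPpos]
  linarith

end
end

section
/- Let d ≥ 1 be an integer, δ ∈ (0,1), and let l₁,…,l_m ∈ ℝ^d and δ̂ ∈ (0, δ/4] be such that every a ∈ 𝕊_{δ/4} can be written as a = Σ_{k=1}^m λ_k l_k l_kᵀ with λ_k ∈ [δ̂, δ̂⁻¹] for all k. Define P(M) = max over (a₁,…,a_m) ∈ [δ̂/2, 2δ̂⁻¹]^m of Σ_{k=1}^m a_k ⟨M l_k, l_k⟩ for symmetric d×d matrices M. Then for every symmetric d×d matrix M, P(M) ≥ P₀(M) + (δ/4) Σ_{k=1}^d |λ_k(M)|, where λ_1(M),…,λ_d(M) are the eigenvalues of M. -/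
open scoped BigOperators NNReal

attribute [local instance] Matrix.frobeniusNormedAddCommGroup Matrix.frobeniusNormedSpace

noncomputable section

/-- The quadratic form `⟨M w, w⟩ = Σ_{i,j} M i j * w j * w i`. -/
def quadForm (d : ℕ) (M : Matrix (Fin d) (Fin d) ℝ) (w : Fin d → ℝ) : ℝ :=
  ∑ i, ∑ j, M i j * w j * w i

/-- The operator `P(M) = max over (a₁,…,a_m) ∈ [δ̂/2, 2δ̂⁻¹]^m of Σ_k a_k ⟨M l_k, l_k⟩`. -/
def Pop (d m : ℕ) (δhat : ℝ) (l : Fin m → Fin d → ℝ)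
    (M : Matrix (Fin d) (Fin d) ℝ) : ℝ :=
  sSup {s : ℝ | ∃ a : Fin m → ℝ,
    (∀ k, δhat / 2 ≤ a k ∧ a k ≤ 2 * δhat⁻¹) ∧ s = ∑ k, a k * quadForm d M (l k)}

/- ### Auxiliary sum-manipulation lemmas -/

private lemma sum_mul_sum' {n n' : ℕ} (F : Fin n → ℝ) (G : Fin n' → ℝ) :
    (∑ i, F i) * (∑ j, G j) = ∑ i, ∑ j, F i * G j := by
  rw [Finset.sum_mul]
  exact Finset.sum_congr rfl fun i _ => Finset.mul_sum _ _ _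

private lemma comm3 {n n' n'' : ℕ} (f : Fin n → Fin n' → Fin n'' → ℝ) :
    ∑ i, ∑ j, ∑ k, f i j k = ∑ k, ∑ i, ∑ j, f i j k := by
  calc ∑ i, ∑ j, ∑ k, f i j k = ∑ i, ∑ k, ∑ j, f i j k :=
        Finset.sum_congr rfl fun i _ => Finset.sum_comm
    _ = ∑ k, ∑ i, ∑ j, f i j k := Finset.sum_comm

private lemma comm4 {n : ℕ} (f : Fin n → Fin n → Fin n → Fin n → ℝ) :
    ∑ i, ∑ j, ∑ r, ∑ p, f i j r p = ∑ r, ∑ p, ∑ i, ∑ j, f i j r p := by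
  calc ∑ i, ∑ j, ∑ r, ∑ p, f i j r p
      = ∑ i, ∑ r, ∑ p, ∑ j, f i j r p := Finset.sum_congr rfl fun i _ => by
        rw [comm3 (fun j r p => f i j r p), comm3 (fun p j r => f i j r p)]
    _ = ∑ r, ∑ i, ∑ p, ∑ j, f i j r p := Finset.sum_comm
    _ = ∑ r, ∑ p, ∑ i, ∑ j, f i j r p := Finset.sum_congr rfl fun r _ => Finset.sum_comm

private lemma factor_sum {n : ℕ} (r : ℝ) (F G : Fin n → ℝ) :
    ∑ i, ∑ j, r * (F i * G j) = r * ((∑ i, F i) * (∑ j, G j)) := by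
  rw [sum_mul_sum', Finset.mul_sum]
  exact Finset.sum_congr rfl fun i _ => (Finset.mul_sum _ _ _).symm

private lemma arith_lemma (δ A B T : ℝ) (hδ0 : 0 < δ) (hδ1 : δ < 1) (hA : 0 ≤ A) (hB : 0 ≤ B)
    (hT : T = 4 * δ⁻¹ * A - δ / 4 * B) :
    2 * δ⁻¹ * A - δ / 2 * B + δ / 4 * (A + B) ≤ 5 / 4 * T + 3 / 4 * |T| := by
  have hδinv0 : (0:ℝ) < δ⁻¹ := inv_pos.mpr hδ0
  have hδinv1 : (1:ℝ) ≤ δ⁻¹ := by nlinarith [mul_inv_cancel₀ hδ0.ne']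
  rcases le_or_gt 0 T with h0 | h0
  · rw [abs_of_nonneg h0]
    rw [hT] at h0 ⊢
    have h1 : δ / 4 * B ≤ 4 * δ⁻¹ * A := by linarith
    have h2 : δ / 4 * A ≤ δ⁻¹ * A := mul_le_mul_of_nonneg_right (by linarith) hA
    have h3 : 0 ≤ δ⁻¹ * A := mul_nonneg hδinv0.le hA
    linarith
  · rw [abs_of_neg h0]
    rw [hT] at h0 ⊢
    have h1 : 4 * δ⁻¹ * A < δ / 4 * B := by linarith
    have h2 : 4 * A < δ * δ / 4 * B := by
      nlinarith [mul_lt_mul_of_pos_left h1 hδ0, mul_inv_cancel₀ hδ0.ne']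
    have h2A : 2 * A ≤ B := by nlinarith
    have h4 : 0 ≤ δ / 8 * B - δ / 4 * A := by
      nlinarith [mul_nonneg hδ0.le (show (0:ℝ) ≤ B - 2 * A by linarith)]
    linarith

/-- Inequality (3.6.1) from Section 3 of Krylov, "An ersatz existence theorem for
fully nonlinear parabolic equations without convexity assumptions": the operator
`P` dominates Pucci's operator `P₀` plus `(δ/4) Σ |λ_k(M)|`. -/
theorem Pop_ge_pucci_add (d m : ℕ) (hd : 1 ≤ d) (hm : 1 ≤ m)
    (δ : ℝ) (hδ : δ ∈ Set.Ioo (0:ℝ) 1)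
    (δhat : ℝ) (hδhat : δhat ∈ Set.Ioc (0:ℝ) (δ / 4))
    (l : Fin m → Fin d → ℝ)
    (hrep : ∀ a ∈ Sdelta d (δ / 4), ∃ lam : Fin m → ℝ,
      (∀ k, δhat ≤ lam k ∧ lam k ≤ δhat⁻¹) ∧
      ∀ i j, a i j = ∑ k, lam k * l k i * l k j) :
    ∀ (M : Matrix (Fin d) (Fin d) ℝ) (hM : M.IsHermitian),
      pucci d δ M + (δ / 4) * (∑ k, |hM.eigenvalues k|) ≤ Pop d m δhat l M := by
  intro M hM
  obtain ⟨hδ0, hδ1⟩ := hδ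
  obtain ⟨hδh0, hδh4⟩ := hδhat
  classical
  have hδinv0 : (0:ℝ) < δ⁻¹ := inv_pos.mpr hδ0
  have hδinv1 : (1:ℝ) ≤ δ⁻¹ := by
    nlinarith [mul_inv_cancel₀ hδ0.ne']
  -- Orthonormal eigen-system
  obtain ⟨U, hUU, hUUt, hMent⟩ : ∃ U : Matrix (Fin d) (Fin d) ℝ,
      (∀ p r, (∑ i, U i p * U i r) = if p = r then (1:ℝ) else 0) ∧
      (∀ i i', (∑ k, U i k * U i' k) = if i = i' then (1:ℝ) else 0) ∧
      (∀ i j, M i j = ∑ k, hM.eigenvalues k * U i k * U j k) := by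
    refine ⟨(hM.eigenvectorUnitary : Matrix (Fin d) (Fin d) ℝ), ?_, ?_, ?_⟩
    · intro p r
      have h1 : star (hM.eigenvectorUnitary : Matrix (Fin d) (Fin d) ℝ) *
          (hM.eigenvectorUnitary : Matrix (Fin d) (Fin d) ℝ) = 1 :=
        Matrix.mem_unitaryGroup_iff'.mp (hM.eigenvectorUnitary).2
      have h2 := congrFun (congrFun h1 p) r
      simpa [Matrix.mul_apply, Matrix.one_apply, Matrix.star_apply] using h2
    · intro i i'
      have h1 : (hM.eigenvectorUnitary : Matrix (Fin d) (Fin d) ℝ) *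
          star (hM.eigenvectorUnitary : Matrix (Fin d) (Fin d) ℝ) = 1 :=
        Matrix.mem_unitaryGroup_iff.mp (hM.eigenvectorUnitary).2
      have h2 := congrFun (congrFun h1 i) i'
      simpa [Matrix.mul_apply, Matrix.one_apply, Matrix.star_apply] using h2
    · intro i j
      conv_lhs => rw [hM.spectral_theorem]
      simp [Matrix.mul_apply, Matrix.mul_diagonal, Finset.sum_mul,
        Matrix.conjTranspose_apply, Matrix.diagonal_apply, ite_mul, zero_mul,
        Finset.sum_ite_eq', mul_comm, mul_assoc, mul_left_comm]
  set eig : Fin d → ℝ := hM.eigenvalues with heig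
  set c : Fin d → ℝ := fun k => if 0 ≤ eig k then 4 * δ⁻¹ else δ / 4 with hcdef
  have hcb : ∀ k, δ / 4 ≤ c k ∧ c k ≤ 4 * δ⁻¹ := by
    intro k
    have h1 : δ / 4 ≤ 4 * δ⁻¹ := by nlinarith
    by_cases h : 0 ≤ eig k <;> simp only [hcdef, h, if_true, if_false] <;>
      constructor <;> linarith
  set a : Matrix (Fin d) (Fin d) ℝ := Matrix.of fun i j => ∑ p, c p * U i p * U j p with hadef
  have haent : ∀ i j, a i j = ∑ p, c p * U i p * U j p := fun i j => rfl
  -- key orthogonality computation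
  have key : ∀ x y : Fin d → ℝ,
      (∑ i, ∑ j, (∑ r, x r * U i r * U j r) * (∑ p, y p * U i p * U j p)) = ∑ r, x r * y r := by
    intro x y
    calc ∑ i, ∑ j, (∑ r, x r * U i r * U j r) * (∑ p, y p * U i p * U j p)
        = ∑ i, ∑ j, ∑ r, ∑ p, (x r * y p) * ((U i r * U i p) * (U j r * U j p)) := by
          refine Finset.sum_congr rfl fun i _ => Finset.sum_congr rfl fun j _ => ?_
          rw [sum_mul_sum']
          exact Finset.sum_congr rfl fun r _ => Finset.sum_congr rfl fun p _ => by ring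
      _ = ∑ r, ∑ p, ∑ i, ∑ j, (x r * y p) * ((U i r * U i p) * (U j r * U j p)) := comm4 _
      _ = ∑ r, ∑ p, (x r * y p) * ((∑ i, U i r * U i p) * (∑ j, U j r * U j p)) := by
          refine Finset.sum_congr rfl fun r _ => Finset.sum_congr rfl fun p _ => ?_
          rw [factor_sum]
      _ = ∑ r, x r * y r := by
          refine Finset.sum_congr rfl fun r _ => ?_
          rw [Finset.sum_eq_single r]
          · rw [hUU r r, if_pos rfl]; ring
          · intro p _ hpr
            rw [hUU r p, if_neg (fun h => hpr h.symm)]; ring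
          · intro h; exact absurd (Finset.mem_univ r) h
  -- quadratic form of `a`
  have hquad : ∀ ξ : Fin d → ℝ,
      (∑ i, ∑ j, a i j * ξ j * ξ i) = ∑ k, c k * (∑ i, U i k * ξ i) ^ 2 := by
    intro ξ
    calc ∑ i, ∑ j, a i j * ξ j * ξ i
        = ∑ i, ∑ j, ∑ k, c k * ((U i k * ξ i) * (U j k * ξ j)) := by
          refine Finset.sum_congr rfl fun i _ => Finset.sum_congr rfl fun j _ => ?_
          rw [haent, Finset.sum_mul, Finset.sum_mul]
          exact Finset.sum_congr rfl fun k _ => by ring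
      _ = ∑ k, ∑ i, ∑ j, c k * ((U i k * ξ i) * (U j k * ξ j)) := comm3 _
      _ = ∑ k, c k * ((∑ i, U i k * ξ i) * (∑ j, U j k * ξ j)) := by
          refine Finset.sum_congr rfl fun k _ => ?_
          rw [factor_sum]
      _ = ∑ k, c k * (∑ i, U i k * ξ i) ^ 2 := by
          exact Finset.sum_congr rfl fun k _ => by ring
  have hnorm : ∀ ξ : Fin d → ℝ, (∑ k, (∑ i, U i k * ξ i) ^ 2) = ∑ i, ξ i ^ 2 := by
    intro ξ
    calc ∑ k, (∑ i, U i k * ξ i) ^ 2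
        = ∑ k, ∑ i, ∑ j, (ξ i * ξ j) * (U i k * U j k) := by
          refine Finset.sum_congr rfl fun k _ => ?_
          rw [sq, sum_mul_sum']
          exact Finset.sum_congr rfl fun i _ => Finset.sum_congr rfl fun j _ => by ring
      _ = ∑ i, ∑ j, ∑ k, (ξ i * ξ j) * (U i k * U j k) := (comm3 _).symm
      _ = ∑ i, ∑ j, (ξ i * ξ j) * (if i = j then (1:ℝ) else 0) := by
          refine Finset.sum_congr rfl fun i _ => Finset.sum_congr rfl fun j _ => ?_
          rw [← Finset.mul_sum, hUUt i j]
      _ = ∑ i, ξ i ^ 2 := by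
          refine Finset.sum_congr rfl fun i _ => ?_
          simp [mul_ite, Finset.sum_ite_eq, sq]
  -- `a` is in `Sdelta d (δ/4)`
  have haS : a ∈ Sdelta d (δ / 4) := by
    refine ⟨?_, fun ξ => ⟨?_, ?_⟩⟩
    · show a.conjTranspose = a
      ext i j
      simp only [Matrix.conjTranspose_apply, haent, star_trivial]
      exact Finset.sum_congr rfl fun p _ => by ring
    · rw [hquad ξ, ← hnorm ξ, Finset.mul_sum]
      exact Finset.sum_le_sum fun k _ =>
        mul_le_mul_of_nonneg_right (hcb k).1 (sq_nonneg _)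
    · have hinv_eq : (δ / 4)⁻¹ = 4 * δ⁻¹ := by
        rw [inv_div]; ring
      rw [hquad ξ, ← hnorm ξ, hinv_eq, Finset.mul_sum]
      exact Finset.sum_le_sum fun k _ =>
        mul_le_mul_of_nonneg_right (hcb k).2 (sq_nonneg _)
  obtain ⟨lam, hlamb, hlament⟩ := hrep a haS
  set q : Fin m → ℝ := fun k => quadForm d M (l k) with hqdef
  -- trace identity
  have htrace : (∑ k, lam k * q k) = ∑ r, eig r * c r := by
    calc ∑ k, lam k * q k
        = ∑ k, ∑ i, ∑ j, M i j * (lam k * l k i * l k j) := by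
          refine Finset.sum_congr rfl fun k _ => ?_
          simp only [hqdef, quadForm, Finset.mul_sum]
          exact Finset.sum_congr rfl fun i _ => Finset.sum_congr rfl fun j _ => by ring
      _ = ∑ i, ∑ j, ∑ k, M i j * (lam k * l k i * l k j) :=
          (comm3 (fun i j k => M i j * (lam k * l k i * l k j))).symm
      _ = ∑ i, ∑ j, M i j * a i j := by
          refine Finset.sum_congr rfl fun i _ => Finset.sum_congr rfl fun j _ => ?_
          rw [hlament i j, Finset.mul_sum]
      _ = ∑ i, ∑ j, (∑ r, eig r * U i r * U j r) * (∑ p, c p * U i p * U j p) := by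
          refine Finset.sum_congr rfl fun i _ => Finset.sum_congr rfl fun j _ => ?_
          rw [← hMent i j, haent]
      _ = ∑ r, eig r * c r := key eig c
  set A : ℝ := ∑ k, max (eig k) 0 with hAdef
  set B : ℝ := ∑ k, max (-(eig k)) 0 with hBdef
  have hA : 0 ≤ A := Finset.sum_nonneg fun k _ => le_max_right _ _
  have hB : 0 ≤ B := Finset.sum_nonneg fun k _ => le_max_right _ _
  have hT : (∑ k, lam k * q k) = 4 * δ⁻¹ * A - δ / 4 * B := by
    rw [htrace, hAdef, hBdef, Finset.mul_sum, Finset.mul_sum, ← Finset.sum_sub_distrib]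
    refine Finset.sum_congr rfl fun r _ => ?_
    by_cases h : 0 ≤ eig r
    · rw [hcdef]
      simp only [h, if_true]
      rw [max_eq_left h, max_eq_right (neg_nonpos.mpr h)]
      ring
    · push_neg at h
      rw [hcdef]
      simp only [not_le.mpr h, if_false]
      rw [max_eq_right h.le, max_eq_left (neg_nonneg.mpr h.le)]
      ring
  have habs : (∑ k, |eig k|) = A + B := by
    rw [hAdef, hBdef, ← Finset.sum_add_distrib]
    refine Finset.sum_congr rfl fun k _ => ?_
    rcases le_or_gt 0 (eig k) with h | h
    · rw [abs_of_nonneg h, max_eq_left h, max_eq_right (neg_nonpos.mpr h)]; ring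
    · rw [abs_of_neg h, max_eq_right h.le, max_eq_left (neg_nonneg.mpr h.le)]; ring
  have hpucci : pucci d δ M = 2 * δ⁻¹ * A - δ / 2 * B := by
    unfold pucci
    rw [dif_pos hM]
  -- the competitor coefficients
  set b : Fin m → ℝ := fun k => if 0 ≤ q k then 2 * lam k else lam k / 2 with hbdef
  have hbb : ∀ k, δhat / 2 ≤ b k ∧ b k ≤ 2 * δhat⁻¹ := by
    intro k
    have h1 := (hlamb k).1
    have h2 := (hlamb k).2
    have h3 : 0 < δhat⁻¹ := inv_pos.mpr hδh0
    by_cases h : 0 ≤ q k <;> simp only [hbdef, h, if_true, if_false] <;>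
      constructor <;> linarith
  have hmem : (∑ k, b k * q k) ∈ {s : ℝ | ∃ a : Fin m → ℝ,
      (∀ k, δhat / 2 ≤ a k ∧ a k ≤ 2 * δhat⁻¹) ∧ s = ∑ k, a k * quadForm d M (l k)} :=
    ⟨b, hbb, rfl⟩
  have hbdd : BddAbove {s : ℝ | ∃ a : Fin m → ℝ,
      (∀ k, δhat / 2 ≤ a k ∧ a k ≤ 2 * δhat⁻¹) ∧ s = ∑ k, a k * quadForm d M (l k)} := by
    refine ⟨∑ k, 2 * δhat⁻¹ * |q k|, ?_⟩
    rintro s ⟨a', ha', rfl⟩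
    refine Finset.sum_le_sum fun k _ => ?_
    have h0 : 0 ≤ a' k := le_trans (by positivity) (ha' k).1
    calc a' k * quadForm d M (l k) ≤ a' k * |q k| :=
          mul_le_mul_of_nonneg_left (le_abs_self _) h0
      _ ≤ 2 * δhat⁻¹ * |q k| := mul_le_mul_of_nonneg_right (ha' k).2 (abs_nonneg _)
  have hPop : (∑ k, b k * q k) ≤ Pop d m δhat l M := by
    unfold Pop
    exact le_csSup hbdd hmem
  -- lower bound on the competitor sum
  have hS : (∑ k, b k * q k) =
      5 / 4 * (∑ k, lam k * q k) + 3 / 4 * (∑ k, lam k * |q k|) := by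
    rw [Finset.mul_sum, Finset.mul_sum, ← Finset.sum_add_distrib]
    refine Finset.sum_congr rfl fun k _ => ?_
    by_cases h : 0 ≤ q k
    · simp only [hbdef, h, if_true]
      rw [abs_of_nonneg h]; ring
    · push_neg at h
      simp only [hbdef, not_le.mpr h, if_false]
      rw [abs_of_neg h]; ring
  have habsT : |∑ k, lam k * q k| ≤ ∑ k, lam k * |q k| := by
    calc |∑ k, lam k * q k| ≤ ∑ k, |lam k * q k| := Finset.abs_sum_le_sum_abs _ _
      _ = ∑ k, lam k * |q k| := Finset.sum_congr rfl fun k _ => by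
          rw [abs_mul, abs_of_nonneg (le_trans hδh0.le (hlamb k).1)]
  have hSge : 5 / 4 * (∑ k, lam k * q k) + 3 / 4 * |∑ k, lam k * q k| ≤
      ∑ k, b k * q k := by
    rw [hS]; linarith
  -- arithmetic with eigenvalue sums
  have harith : 2 * δ⁻¹ * A - δ / 2 * B + δ / 4 * (A + B) ≤
      5 / 4 * (∑ k, lam k * q k) + 3 / 4 * |∑ k, lam k * q k| :=
    arith_lemma δ A B _ hδ0 hδ1 hA hB hT
  rw [hpucci, habs]
  calc 2 * δ⁻¹ * A - δ / 2 * B + δ / 4 * (A + B)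
      ≤ 5 / 4 * (∑ k, lam k * q k) + 3 / 4 * |∑ k, lam k * q k| := harith
    _ ≤ ∑ k, b k * q k := hSge
    _ ≤ Pop d m δhat l M := hPop
end
end

section
/- Fix integers d, m ≥ 1 and constants δ ∈ (0,1), K > 0, K₀' > 0, H̄ ≥ 0, N' > 0, L > 0. Set C'' = [−K₀', K₀'] × 𝕊_{δ/2} and B'' = [−2K₀', 2K₀'] × 𝕊_{δ/4}. Let λ₁,…,λ_m : 𝕊_{δ/4} → ℝ be Lipschitz continuous with constant L. Let H : ℝ^{d+1} × Sym_d(ℝ) → ℝ satisfy: (a) |H(u', y) − H(v', y)| ≤ N'|u' − v'| for all u', v' ∈ ℝ^{d+1} and all symmetric d×d matrices y; (b) for every (u', y) there exists (f, l) ∈ C'' with (H̄ + K + |u'|) f + tr(l y) = H(u', y). For (u', y) define B(u', y) = { (f, l) ∈ B'' : (H̄ + K + |u'|) f + tr(l y) ≤ H(u', y) } (a nonempty compact set), and for z ∈ ℝ^m define 𝒢(u', y, z) = max over (f, l) ∈ B(u', y) of [ (H̄ + K + |u'|) f + Σ_{k=1}^m λ_k(l) z_k ], and cH(u', z) = inf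 over symmetric y of 𝒢(u', y, z). Then there exist constants N > 0 and ε₀ > 0, depending only on d, m, δ, K₀', N', L, H̄ and K, such that for all u', v' ∈ ℝ^{d+1} with |v'| ≤ ε₀, all z ∈ ℝ^m, and all symmetric y: 𝒢(u'+v', y, z) ≤ 𝒢(u', y, z) + N|v'|(1 + |u'| + |z|); consequently |cH(u'+v', z) − cH(u', z)| ≤ N|v'|(1 + |u'| + |z|) whenever |v'| ≤ ε₀. -/
open scoped BigOperators NNReal

attribute [local instance] Matrix.frobeniusNormedAddCommGroup Matrix.frobeniusNormedSpace

noncomputable section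

/-- The set `B(u',y) ⊆ B'' = [−2K₀', 2K₀'] × 𝕊_{δ/4}` of pairs `(f,l)` with
`(H̄ + K + |u'|) f + tr(l y) ≤ H(u', y)`. -/
def Bset (d : ℕ) (δ K₀' Hbar K : ℝ)
    (H : (Fin (d + 1) → ℝ) → Matrix (Fin d) (Fin d) ℝ → ℝ)
    (u' : Fin (d + 1) → ℝ) (y : Matrix (Fin d) (Fin d) ℝ) :
    Set (ℝ × Matrix (Fin d) (Fin d) ℝ) :=
  {p | |p.1| ≤ 2 * K₀' ∧ p.2 ∈ Sdelta d (δ / 4) ∧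
    (Hbar + K + eunorm u') * p.1 + Matrix.trace (p.2 * y) ≤ H u' y}

/-- `𝒢(u', y, z) = max over (f,l) ∈ B(u',y) of (H̄ + K + |u'|) f + Σ_k λ_k(l) z_k`. -/
def Gmax (d m : ℕ) (δ K₀' Hbar K : ℝ)
    (H : (Fin (d + 1) → ℝ) → Matrix (Fin d) (Fin d) ℝ → ℝ)
    (lam : Fin m → Matrix (Fin d) (Fin d) ℝ → ℝ)
    (u' : Fin (d + 1) → ℝ) (y : Matrix (Fin d) (Fin d) ℝ) (z : Fin m → ℝ) : ℝ :=
  sSup {s : ℝ | ∃ p ∈ Bset d δ K₀' Hbar K H u' y,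
    s = (Hbar + K + eunorm u') * p.1 + ∑ k, lam k p.2 * z k}

/-- `cH(u', z) = inf over symmetric y of 𝒢(u', y, z)`. -/
def cHinf (d m : ℕ) (δ K₀' Hbar K : ℝ)
    (H : (Fin (d + 1) → ℝ) → Matrix (Fin d) (Fin d) ℝ → ℝ)
    (lam : Fin m → Matrix (Fin d) (Fin d) ℝ → ℝ)
    (u' : Fin (d + 1) → ℝ) (z : Fin m → ℝ) : ℝ :=
  sInf {s : ℝ | ∃ y : Matrix (Fin d) (Fin d) ℝ, y.IsHermitian ∧
    s = Gmax d m δ K₀' Hbar K H lam u' y z}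



/-! ### Auxiliary lemmas -/

lemma eunorm_eq_norm {n : ℕ} (u : Fin n → ℝ) :
    eunorm u = ‖(WithLp.equiv 2 (Fin n → ℝ)).symm u‖ := by
  rw [EuclideanSpace.norm_eq]
  simp [eunorm, sq_abs]

lemma eunorm_nonneg {n : ℕ} (u : Fin n → ℝ) : 0 ≤ eunorm u := Real.sqrt_nonneg _

lemma eunorm_add_le {n : ℕ} (u v : Fin n → ℝ) : eunorm (u + v) ≤ eunorm u + eunorm v := by
  rw [eunorm_eq_norm, eunorm_eq_norm, eunorm_eq_norm]
  rw [show (WithLp.equiv 2 (Fin n → ℝ)).symm (u + v)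
      = (WithLp.equiv 2 (Fin n → ℝ)).symm u + (WithLp.equiv 2 (Fin n → ℝ)).symm v by rfl]
  exact norm_add_le _ _

lemma eunorm_neg {n : ℕ} (u : Fin n → ℝ) : eunorm (-u) = eunorm u := by
  simp [eunorm]

lemma abs_eunorm_sub {n : ℕ} (u v : Fin n → ℝ) : |eunorm (u + v) - eunorm u| ≤ eunorm v := by
  rw [abs_sub_le_iff]
  constructor
  · linarith [eunorm_add_le u v]
  · have := eunorm_add_le (u + v) (-v)
    simp only [add_neg_cancel_right, eunorm_neg] at this
    linarith

lemma single_le_eunorm {n : ℕ} (u : Fin n → ℝ) (k : Fin n) : |u k| ≤ eunorm u := by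
  rw [← Real.sqrt_sq_eq_abs]
  apply Real.sqrt_le_sqrt
  exact Finset.single_le_sum (f := fun i => u i ^ 2) (fun i _ => sq_nonneg _) (Finset.mem_univ k)

lemma Sdelta.entry_bound {d : ℕ} {θ : ℝ} (hθ : 0 < θ) {a : Matrix (Fin d) (Fin d) ℝ}
    (h : a ∈ Sdelta d θ) (i j : Fin d) : |a i j| ≤ θ⁻¹ := by
  obtain ⟨hherm, hq⟩ := h
  have hsym : a j i = a i j := by
    have := congrFun (congrFun hherm i) j
    simpa [Matrix.conjTranspose_apply] using this
  by_cases hij : i = j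
  · subst hij
    have h1 := hq (Pi.single i 1)
    simp [Pi.single_apply, mul_ite, ite_mul, ite_pow, Finset.sum_ite_eq'] at h1
    rw [abs_le]
    constructor
    · nlinarith [inv_pos.mpr hθ]
    · linarith [h1.2]
  · have key : ∀ c : ℝ, a i i + c * a i j + c * a j i + c * c * a j j
        ≤ θ⁻¹ * (1 + c ^ 2) ∧ θ * (1 + c^2) ≤ a i i + c * a i j + c * a j i + c * c * a j j := by
      intro c
      have h1 := hq ((Pi.single i 1 : Fin d → ℝ) + c • (Pi.single j 1 : Fin d → ℝ))
      have e1 : (∑ i', ∑ j', a i' j' * ((Pi.single i 1 : Fin d → ℝ) + c • (Pi.single j 1 : Fin d → ℝ)) j'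
          * ((Pi.single i 1 : Fin d → ℝ) + c • (Pi.single j 1 : Fin d → ℝ)) i')
          = a i i + c * a i j + c * a j i + c * c * a j j := by
        simp [Pi.single_apply, mul_ite, ite_mul, mul_add, add_mul, Finset.sum_add_distrib,
          Finset.sum_ite_eq', hij, Ne.symm hij]
        ring
      have e2 : (∑ k, ((Pi.single i 1 : Fin d → ℝ) + c • (Pi.single j 1 : Fin d → ℝ)) k ^ 2) = 1 + c^2 := by
        simp [Pi.single_apply, add_sq, Finset.sum_add_distrib, mul_ite, ite_mul, mul_pow, ite_pow,
          Finset.sum_ite_eq', hij, Ne.symm hij]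
      rw [e1, e2] at h1
      exact ⟨h1.2, h1.1⟩
    have k1 := key 1
    have k2 := key (-1)
    have hd1 := key 0
    rw [abs_le]
    constructor <;> nlinarith [k1.1, k1.2, k2.1, k2.2, hd1.1, hd1.2]

lemma frobNorm_sub_bound {d : ℕ} {θ : ℝ} (hθ : 0 < θ) {a b : Matrix (Fin d) (Fin d) ℝ}
    (ha : a ∈ Sdelta d θ) (hb : b ∈ Sdelta d θ) :
    frobNorm d (a - b) ≤ 2 * d * θ⁻¹ := by
  have hbd : ∀ i j, ((a - b) i j) ^ 2 ≤ (2 * θ⁻¹) ^ 2 := by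
    intro i j
    have h1 := Sdelta.entry_bound hθ ha i j
    have h2 := Sdelta.entry_bound hθ hb i j
    have : |(a - b) i j| ≤ 2 * θ⁻¹ := by
      simp only [Matrix.sub_apply]
      calc |a i j - b i j| ≤ |a i j| + |b i j| := abs_sub _ _
        _ ≤ 2 * θ⁻¹ := by linarith
    nlinarith [abs_nonneg ((a-b) i j), sq_abs ((a-b) i j)]
  have hsum : (∑ i, ∑ j, ((a - b) i j) ^ 2) ≤ (d : ℝ) * ((d : ℝ) * (2 * θ⁻¹)^2) := by
    calc (∑ i, ∑ j, ((a - b) i j) ^ 2) ≤ ∑ _i : Fin d, (d : ℝ) * (2 * θ⁻¹)^2 := by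
          apply Finset.sum_le_sum; intro i _
          calc (∑ j, ((a - b) i j) ^ 2) ≤ ∑ _j : Fin d, (2 * θ⁻¹)^2 :=
                Finset.sum_le_sum fun j _ => hbd i j
            _ = (d : ℝ) * (2 * θ⁻¹)^2 := by simp [Finset.sum_const]
      _ = (d : ℝ) * ((d : ℝ) * (2 * θ⁻¹)^2) := by simp [Finset.sum_const]
  have h0 : (0:ℝ) < θ⁻¹ := inv_pos.mpr hθ
  calc frobNorm d (a - b) ≤ Real.sqrt ((2 * d * θ⁻¹)^2) := by
        apply Real.sqrt_le_sqrt
        calc (∑ i, ∑ j, ((a - b) i j) ^ 2) ≤ (d:ℝ) * ((d:ℝ) * (2*θ⁻¹)^2) := hsum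
          _ = (2 * d * θ⁻¹)^2 := by ring
    _ = 2 * d * θ⁻¹ := Real.sqrt_sq (by positivity)

lemma frobNorm_smul {d : ℕ} {s : ℝ} (hs : 0 ≤ s) (M : Matrix (Fin d) (Fin d) ℝ) :
    frobNorm d (s • M) = s * frobNorm d M := by
  unfold frobNorm
  rw [show (∑ i, ∑ j, ((s • M) i j) ^ 2) = s^2 * ∑ i, ∑ j, (M i j)^2 by
    simp [Finset.mul_sum, mul_pow]]
  rw [Real.sqrt_mul (by positivity), Real.sqrt_sq hs]

lemma Sdelta.convex_comb {d : ℕ} {θ : ℝ} {a b : Matrix (Fin d) (Fin d) ℝ} {s : ℝ}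
    (hs0 : 0 ≤ s) (hs1 : s ≤ 1) (ha : a ∈ Sdelta d θ) (hb : b ∈ Sdelta d θ) :
    (1 - s) • a + s • b ∈ Sdelta d θ := by
  obtain ⟨hah, haq⟩ := ha
  obtain ⟨hbh, hbq⟩ := hb
  constructor
  · ext i j
    have e1 : a j i = a i j := by
      have := congrFun (congrFun hah i) j; simpa [Matrix.conjTranspose_apply] using this
    have e2 : b j i = b i j := by
      have := congrFun (congrFun hbh i) j; simpa [Matrix.conjTranspose_apply] using this
    simp [Matrix.conjTranspose_apply, Matrix.add_apply, Matrix.smul_apply, e1, e2]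
  · intro ξ
    have e : (∑ i, ∑ j, ((1-s) • a + s • b) i j * ξ j * ξ i)
        = (1-s) * (∑ i, ∑ j, a i j * ξ j * ξ i) + s * (∑ i, ∑ j, b i j * ξ j * ξ i) := by
      simp [Finset.mul_sum, Finset.sum_add_distrib, Matrix.add_apply, Matrix.smul_apply,
        add_mul, smul_eq_mul]
      congr 1 <;> (apply Finset.sum_congr rfl; intros; apply Finset.sum_congr rfl; intros; ring)
    rw [e]
    have h1 := haq ξ; have h2 := hbq ξ
    constructor <;> nlinarith [h1.1, h1.2, h2.1, h2.2]

lemma Sdelta.mono {d : ℕ} {δ : ℝ} (hδ0 : 0 < δ) :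
    Sdelta d (δ / 2) ⊆ Sdelta d (δ / 4) := by
  intro a ⟨hah, haq⟩
  refine ⟨hah, fun ξ => ?_⟩
  have h := haq ξ
  have hξ : 0 ≤ ∑ i, ξ i ^ 2 := Finset.sum_nonneg fun i _ => sq_nonneg _
  have hi : (δ/2)⁻¹ ≤ (δ/4)⁻¹ := by
    apply inv_anti₀ (by linarith) (by linarith)
  constructor
  · nlinarith [h.1]
  · nlinarith [h.2, mul_le_mul_of_nonneg_right hi hξ]

lemma Sdelta.smul_one_mem {d : ℕ} {θ : ℝ} (hθ0 : 0 < θ) (hθ1 : θ ≤ 1) :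
    (θ • (1 : Matrix (Fin d) (Fin d) ℝ)) ∈ Sdelta d θ := by
  constructor
  · ext i j
    simp [Matrix.conjTranspose_apply, Matrix.smul_apply, Matrix.one_apply]
    by_cases h : i = j <;> simp [h, eq_comm]
  · intro ξ
    have e : (∑ i, ∑ j, (θ • (1 : Matrix (Fin d) (Fin d) ℝ)) i j * ξ j * ξ i)
        = θ * ∑ i, ξ i ^ 2 := by
      simp [Matrix.smul_apply, Matrix.one_apply, ite_mul, mul_ite, Finset.mul_sum,
        Finset.sum_ite_eq', sq]
      apply Finset.sum_congr rfl; intros; ring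
    rw [e]
    have hξ : 0 ≤ ∑ i, ξ i ^ 2 := Finset.sum_nonneg fun i _ => sq_nonneg _
    have : θ ≤ θ⁻¹ := by
      have h1 : θ * θ ≤ 1 := by nlinarith
      rw [inv_eq_one_div, le_div_iff₀ hθ0]; nlinarith
    exact ⟨le_refl _, by nlinarith⟩

lemma trace_comb {d : ℕ} (s t : ℝ) (a b y : Matrix (Fin d) (Fin d) ℝ) :
    Matrix.trace ((s • a + t • b) * y) = s * Matrix.trace (a * y) + t * Matrix.trace (b * y) := by
  rw [Matrix.add_mul, Matrix.smul_mul, Matrix.smul_mul, Matrix.trace_add, Matrix.trace_smul,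
    Matrix.trace_smul, smul_eq_mul, smul_eq_mul]

set_option maxHeartbeats 1000000 in
/-- Lemma 4.1 of Krylov, "An ersatz existence theorem for fully nonlinear
parabolic equations without convexity assumptions" (via the key inequality
(6.3.3)): local Lipschitz continuity in `u'` of the inf–max construction `cH`. -/
theorem cH_locally_lipschitz (d m : ℕ) (hd : 1 ≤ d) (hm : 1 ≤ m)
    (δ : ℝ) (hδ : δ ∈ Set.Ioo (0:ℝ) 1)
    (K K₀' Hbar N' L : ℝ) (hK : 0 < K) (hK₀' : 0 < K₀') (hHbar : 0 ≤ Hbar)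
    (hN' : 0 < N') (hL : 0 < L) :
    ∃ N : ℝ, 0 < N ∧ ∃ ε₀ : ℝ, 0 < ε₀ ∧
      ∀ (lam : Fin m → Matrix (Fin d) (Fin d) ℝ → ℝ),
        -- the `λ_k` are Lipschitz on `𝕊_{δ/4}` with constant `L`
        (∀ k : Fin m, ∀ a ∈ Sdelta d (δ / 4), ∀ b ∈ Sdelta d (δ / 4),
          |lam k a - lam k b| ≤ L * frobNorm d (a - b)) →
      ∀ (H : (Fin (d + 1) → ℝ) → Matrix (Fin d) (Fin d) ℝ → ℝ),
        -- (a) `H` is Lipschitz in `u'` with constant `N'`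
        (∀ (u' v' : Fin (d + 1) → ℝ) (y : Matrix (Fin d) (Fin d) ℝ), y.IsHermitian →
          |H u' y - H v' y| ≤ N' * eunorm (u' - v')) →
        -- (b) for every `(u', y)` there is `(f,l) ∈ C'' = [−K₀',K₀'] × 𝕊_{δ/2}`
        -- realizing `H(u', y)`
        (∀ (u' : Fin (d + 1) → ℝ) (y : Matrix (Fin d) (Fin d) ℝ), y.IsHermitian →
          ∃ (f : ℝ) (lmat : Matrix (Fin d) (Fin d) ℝ), |f| ≤ K₀' ∧
            lmat ∈ Sdelta d (δ / 2) ∧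
            (Hbar + K + eunorm u') * f + Matrix.trace (lmat * y) = H u' y) →
      ∀ (u' v' : Fin (d + 1) → ℝ), eunorm v' ≤ ε₀ →
      ∀ (z : Fin m → ℝ),
        (∀ (y : Matrix (Fin d) (Fin d) ℝ), y.IsHermitian →
          Gmax d m δ K₀' Hbar K H lam (u' + v') y z ≤
            Gmax d m δ K₀' Hbar K H lam u' y z + N * eunorm v' * (1 + eunorm u' + eunorm z)) ∧
        |cHinf d m δ K₀' Hbar K H lam (u' + v') z - cHinf d m δ K₀' Hbar K H lam u' z| ≤
          N * eunorm v' * (1 + eunorm u' + eunorm z)  := by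
  obtain ⟨hδ0, hδ1⟩ := hδ
  have hθ0 : (0:ℝ) < δ/4 := by linarith
  have hθ1 : δ/4 ≤ 1 := by linarith
  have hL0 : 0 ≤ L := hL.le
  set c : ℝ := N' + 2*K₀' with hcdef
  have hc0 : 0 < c := by rw [hcdef]; linarith
  set A : ℝ := c/(K*K₀') with hAdef
  have hA0 : 0 < A := div_pos hc0 (by positivity)
  set D₀ : ℝ := 2*(d:ℝ)*(δ/4)⁻¹ with hD₀def
  have hD₀0 : 0 ≤ D₀ := by rw [hD₀def]; positivity
  set N₀ : ℝ := 2*K₀' + 4*K₀'*A*(Hbar+K) + 4*K₀'*A + A*L*D₀*(m:ℝ) + 1 with hN₀def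
  have hN₀0 : 0 < N₀ := by
    have h1 : 0 ≤ 4*K₀'*A*(Hbar+K) := mul_nonneg (by positivity) (by linarith)
    have h2 : 0 ≤ A*L*D₀*(m:ℝ) := by positivity
    have h3 : 0 ≤ 4*K₀'*A := by positivity
    rw [hN₀def]
    linarith
  refine ⟨2*N₀, by linarith, 1, one_pos, ?_⟩
  intro lam hlam H hHa hHb u' v' hv' z
  -- the fixed anchor matrix
  have ha₀mem : ((δ/4) • (1 : Matrix (Fin d) (Fin d) ℝ)) ∈ Sdelta d (δ/4) :=
    Sdelta.smul_one_mem hθ0 hθ1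
  have hco : ∀ w : Fin (d+1) → ℝ, 0 < Hbar + K + eunorm w :=
    fun w => by have := eunorm_nonneg w; linarith
  -- uniform bound for lam on Sdelta
  have hlamb : ∀ k, ∀ lmat ∈ Sdelta d (δ/4),
      |lam k lmat| ≤ |lam k ((δ/4) • (1 : Matrix (Fin d) (Fin d) ℝ))| + L*D₀ := by
    intro k lmat hlm
    have h1 := hlam k lmat hlm _ ha₀mem
    have h2 := frobNorm_sub_bound hθ0 hlm ha₀mem
    rw [← hD₀def] at h2
    have h3 : L * frobNorm d (lmat - (δ/4) • 1) ≤ L * D₀ := mul_le_mul_of_nonneg_left h2 hL0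
    calc |lam k lmat| = |lam k ((δ/4) • (1 : Matrix (Fin d) (Fin d) ℝ))
            + (lam k lmat - lam k ((δ/4) • 1))| := by ring_nf
      _ ≤ |lam k ((δ/4) • (1 : Matrix (Fin d) (Fin d) ℝ))| + |lam k lmat - lam k ((δ/4) • 1)| :=
          abs_add_le _ _
      _ ≤ _ := by linarith
  set UB : (Fin (d+1) → ℝ) → ℝ := fun w => (Hbar+K+eunorm w)*(2*K₀')
      + ∑ k, (|lam k ((δ/4) • (1 : Matrix (Fin d) (Fin d) ℝ))| + L*D₀)*|z k| with hUBdef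
  -- every admissible value is bounded in absolute value by UB
  have habs : ∀ (w : Fin (d+1) → ℝ) (y : Matrix (Fin d) (Fin d) ℝ)
      (p : ℝ × Matrix (Fin d) (Fin d) ℝ), p ∈ Bset d δ K₀' Hbar K H w y →
      |(Hbar + K + eunorm w) * p.1 + ∑ k, lam k p.2 * z k| ≤ UB w := by
    intro w y p hp
    obtain ⟨hp1, hp2, -⟩ := hp
    have e1 : |(Hbar+K+eunorm w)*p.1| ≤ (Hbar+K+eunorm w)*(2*K₀') := by
      rw [abs_mul, abs_of_pos (hco w)]
      exact mul_le_mul_of_nonneg_left hp1 (hco w).le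
    have e2 : |∑ k, lam k p.2 * z k|
        ≤ ∑ k, (|lam k ((δ/4) • (1 : Matrix (Fin d) (Fin d) ℝ))| + L*D₀)*|z k| := by
      calc |∑ k, lam k p.2 * z k| ≤ ∑ k, |lam k p.2 * z k| := Finset.abs_sum_le_sum_abs _ _
        _ ≤ _ := by
            apply Finset.sum_le_sum; intro k _
            rw [abs_mul]
            exact mul_le_mul_of_nonneg_right (hlamb k p.2 hp2) (abs_nonneg _)
    calc |(Hbar + K + eunorm w) * p.1 + ∑ k, lam k p.2 * z k|
        ≤ |(Hbar+K+eunorm w)*p.1| + |∑ k, lam k p.2 * z k| := abs_add_le _ _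
      _ ≤ UB w := by rw [hUBdef]; dsimp only; linarith
  -- witness in B(w,y) from assumption (b)
  have hwit : ∀ (w : Fin (d+1) → ℝ) (y : Matrix (Fin d) (Fin d) ℝ), y.IsHermitian →
      ∃ (f₀ : ℝ) (l₀ : Matrix (Fin d) (Fin d) ℝ), |f₀| ≤ K₀' ∧ l₀ ∈ Sdelta d (δ/4) ∧
        (Hbar + K + eunorm w) * f₀ + Matrix.trace (l₀ * y) = H w y := by
    intro w y hy
    obtain ⟨f₀, l₀, hf₀, hl₀, heq⟩ := hHb w y hy
    exact ⟨f₀, l₀, hf₀, Sdelta.mono hδ0 hl₀, heq⟩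
  have hwitmem : ∀ (w : Fin (d+1) → ℝ) (y : Matrix (Fin d) (Fin d) ℝ)
      (f₀ : ℝ) (l₀ : Matrix (Fin d) (Fin d) ℝ), |f₀| ≤ K₀' → l₀ ∈ Sdelta d (δ/4) →
      (Hbar + K + eunorm w) * f₀ + Matrix.trace (l₀ * y) ≤ H w y →
      (f₀, l₀) ∈ Bset d δ K₀' Hbar K H w y := by
    intro w y f₀ l₀ hf₀ hl₀ hle
    exact ⟨by simp only; linarith [abs_nonneg f₀], hl₀, hle⟩
  -- Gmax interface
  have hSbdd : ∀ (w : Fin (d+1) → ℝ) (y : Matrix (Fin d) (Fin d) ℝ),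
      BddAbove {s : ℝ | ∃ p ∈ Bset d δ K₀' Hbar K H w y,
        s = (Hbar + K + eunorm w) * p.1 + ∑ k, lam k p.2 * z k} := by
    intro w y
    refine ⟨UB w, ?_⟩
    rintro s ⟨p, hp, rfl⟩
    exact (abs_le.mp (habs w y p hp)).2
  have hGub : ∀ (w : Fin (d+1) → ℝ) (y : Matrix (Fin d) (Fin d) ℝ)
      (p : ℝ × Matrix (Fin d) (Fin d) ℝ), p ∈ Bset d δ K₀' Hbar K H w y →
      (Hbar + K + eunorm w) * p.1 + ∑ k, lam k p.2 * z k
        ≤ Gmax d m δ K₀' Hbar K H lam w y z :=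
    fun w y p hp => le_csSup (hSbdd w y) ⟨p, hp, rfl⟩
  have hGle : ∀ (w : Fin (d+1) → ℝ) (y : Matrix (Fin d) (Fin d) ℝ), y.IsHermitian →
      ∀ B : ℝ, (∀ p ∈ Bset d δ K₀' Hbar K H w y,
        (Hbar + K + eunorm w) * p.1 + ∑ k, lam k p.2 * z k ≤ B) →
      Gmax d m δ K₀' Hbar K H lam w y z ≤ B := by
    intro w y hy B hB
    obtain ⟨f₀, l₀, hf₀, hl₀, heq⟩ := hwit w y hy
    have hne : {s : ℝ | ∃ p ∈ Bset d δ K₀' Hbar K H w y,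
        s = (Hbar + K + eunorm w) * p.1 + ∑ k, lam k p.2 * z k}.Nonempty :=
      ⟨_, ⟨(f₀, l₀), hwitmem w y f₀ l₀ hf₀ hl₀ heq.le, rfl⟩⟩
    apply csSup_le hne
    rintro s ⟨p, hp, rfl⟩
    exact hB p hp
  have hGlow : ∀ (w : Fin (d+1) → ℝ) (y : Matrix (Fin d) (Fin d) ℝ), y.IsHermitian →
      -(UB w) ≤ Gmax d m δ K₀' Hbar K H lam w y z := by
    intro w y hy
    obtain ⟨f₀, l₀, hf₀, hl₀, heq⟩ := hwit w y hy
    have hm' := hwitmem w y f₀ l₀ hf₀ hl₀ heq.le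
    calc -(UB w) ≤ (Hbar + K + eunorm w) * f₀ + ∑ k, lam k l₀ * z k := by
          have := habs w y (f₀, l₀) hm'
          have := neg_abs_le ((Hbar + K + eunorm w) * f₀ + ∑ k, lam k l₀ * z k)
          simp only at *
          linarith [abs_le.mp (habs w y (f₀, l₀) hm')]
      _ ≤ _ := hGub w y (f₀, l₀) hm'
    -- ### the key one-sided estimate, for arbitrary w, v
  have key : ∀ (w v : Fin (d+1) → ℝ) (y : Matrix (Fin d) (Fin d) ℝ), y.IsHermitian →
      Gmax d m δ K₀' Hbar K H lam (w + v) y z ≤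
        Gmax d m δ K₀' Hbar K H lam w y z + N₀ * eunorm v * (1 + eunorm w + eunorm z) := by
    intro w v y hy
    have hE0 : 0 ≤ eunorm v := eunorm_nonneg v
    have hW0 : 0 ≤ eunorm w := eunorm_nonneg w
    have hZ0 : 0 ≤ eunorm z := eunorm_nonneg z
    obtain ⟨f₀, l₀, hf₀, hl₀, heq⟩ := hwit w y hy
    apply hGle (w+v) y hy
    intro p hp
    obtain ⟨hp1, hp2, hp3⟩ := hp
    have hcE : 0 ≤ c * eunorm v := mul_nonneg hc0.le hE0
    have hKK : 0 < K * K₀' := mul_pos hK hK₀'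
    have hden : 0 < c*eunorm v + K*K₀' := by linarith
    set σ : ℝ := c * eunorm v / (c*eunorm v + K*K₀') with hσdef
    have hσ0 : 0 ≤ σ := by rw [hσdef]; exact div_nonneg hcE hden.le
    have hσ1 : σ ≤ 1 := by rw [hσdef, div_le_one hden]; linarith
    have h1σ : 0 ≤ 1 - σ := by linarith
    have hσeq : (1-σ)*(c*eunorm v) = σ*(K*K₀') := by rw [hσdef]; field_simp; ring
    have hσA : σ ≤ A * eunorm v := by
      have e : A * eunorm v = (c*eunorm v)/(K*K₀') := by rw [hAdef]; ring
      rw [hσdef, e, div_le_div_iff₀ hden hKK]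
      nlinarith [mul_nonneg hcE hcE]
    -- defect bound
    have hHdiff := hHa (w+v) w y hy
    rw [show (w+v) - w = v from add_sub_cancel_left w v] at hHdiff
    have hwv := abs_eunorm_sub w v
    have hD : (Hbar+K+eunorm w)*p.1 + Matrix.trace (p.2*y) - H w y ≤ c * eunorm v := by
      have h3 : (eunorm w - eunorm (w+v)) * p.1 ≤ eunorm v * (2*K₀') := by
        calc (eunorm w - eunorm (w+v)) * p.1 ≤ |(eunorm w - eunorm (w+v)) * p.1| := le_abs_self _
          _ = |eunorm w - eunorm (w+v)| * |p.1| := abs_mul _ _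
          _ ≤ eunorm v * (2*K₀') :=
              mul_le_mul (by rw [abs_sub_comm]; exact hwv) hp1 (abs_nonneg _) hE0
      have h2 : H (w+v) y - H w y ≤ N' * eunorm v := by
        have h2' := abs_le.mp hHdiff
        linarith [h2'.2]
      have hring : (Hbar+K+eunorm w)*p.1
          = (Hbar+K+eunorm (w+v))*p.1 + (eunorm w - eunorm (w+v))*p.1 := by ring
      rw [hcdef]
      linarith [hp3]
    -- membership of the perturbed point
    have hf'abs : |(1-σ)*p.1 + σ*(f₀ - K₀')| ≤ 2*K₀' := by
      have h4 : |f₀ - K₀'| ≤ 2*K₀' := by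
        have h4' : |f₀ - K₀'| ≤ |f₀| + |K₀'| := abs_sub f₀ K₀'
        rw [abs_of_pos hK₀'] at h4'
        linarith
      calc |(1-σ)*p.1 + σ*(f₀ - K₀')| ≤ |(1-σ)*p.1| + |σ*(f₀-K₀')| := abs_add_le _ _
        _ = (1-σ)*|p.1| + σ*|f₀-K₀'| := by
            rw [abs_mul, abs_mul, abs_of_nonneg h1σ, abs_of_nonneg hσ0]
        _ ≤ 2*K₀' := by nlinarith
    have hl'mem : (1-σ) • p.2 + σ • l₀ ∈ Sdelta d (δ/4) :=
      Sdelta.convex_comb hσ0 hσ1 hp2 hl₀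
    have htr := trace_comb (1-σ) σ p.2 l₀ y
    have hl'ineq : (Hbar+K+eunorm w)*((1-σ)*p.1 + σ*(f₀ - K₀'))
        + Matrix.trace (((1-σ) • p.2 + σ • l₀) * y) ≤ H w y := by
      rw [htr]
      have t1 : (1-σ)*((Hbar+K+eunorm w)*p.1 + Matrix.trace (p.2*y))
          ≤ (1-σ)*(H w y) + σ*(K*K₀') := by
        have t1' := mul_le_mul_of_nonneg_left hD h1σ
        nlinarith
      have t2 : σ*(K*K₀') ≤ σ*((Hbar+K+eunorm w)*K₀') := by
        apply mul_le_mul_of_nonneg_left ?_ hσ0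
        apply mul_le_mul_of_nonneg_right ?_ hK₀'.le
        linarith [eunorm_nonneg w]
      have hring2 : (Hbar+K+eunorm w)*((1-σ)*p.1 + σ*(f₀-K₀'))
            + ((1-σ)*Matrix.trace (p.2*y) + σ*Matrix.trace (l₀*y))
          = (1-σ)*((Hbar+K+eunorm w)*p.1 + Matrix.trace (p.2*y))
            + σ*((Hbar+K+eunorm w)*f₀ + Matrix.trace (l₀*y))
            - σ*((Hbar+K+eunorm w)*K₀') := by ring
      rw [hring2, heq]
      linarith
    have hmem' : ((1-σ)*p.1 + σ*(f₀ - K₀'), (1-σ) • p.2 + σ • l₀)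
        ∈ Bset d δ K₀' Hbar K H w y := ⟨hf'abs, hl'mem, hl'ineq⟩
    have hvle := hGub w y _ hmem'
    dsimp only at hvle
    -- value comparison
    have b1 : (eunorm (w+v) - eunorm w) * p.1 ≤ eunorm v * (2*K₀') := by
      calc (eunorm (w+v) - eunorm w) * p.1 ≤ |(eunorm (w+v) - eunorm w) * p.1| := le_abs_self _
        _ = |eunorm (w+v) - eunorm w| * |p.1| := abs_mul _ _
        _ ≤ eunorm v * (2*K₀') := mul_le_mul hwv hp1 (abs_nonneg _) hE0
    have b2 : σ*((Hbar+K+eunorm w)*(p.1 - (f₀ - K₀')))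
        ≤ (A*eunorm v)*((Hbar+K+eunorm w)*(4*K₀')) := by
      have inner : (Hbar+K+eunorm w)*(p.1 - (f₀ - K₀')) ≤ (Hbar+K+eunorm w)*(4*K₀') := by
        apply mul_le_mul_of_nonneg_left ?_ (hco w).le
        linarith [(abs_le.mp hp1).1, (abs_le.mp hp1).2, (abs_le.mp hf₀).1, (abs_le.mp hf₀).2]
      calc σ*((Hbar+K+eunorm w)*(p.1 - (f₀ - K₀')))
          ≤ σ*((Hbar+K+eunorm w)*(4*K₀')) := mul_le_mul_of_nonneg_left inner hσ0
        _ ≤ (A*eunorm v)*((Hbar+K+eunorm w)*(4*K₀')) := by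
            apply mul_le_mul_of_nonneg_right hσA
            have := hco w
            positivity
    have hfrob : frobNorm d (p.2 - ((1-σ) • p.2 + σ • l₀)) ≤ σ * D₀ := by
      have e : p.2 - ((1-σ) • p.2 + σ • l₀) = σ • (p.2 - l₀) := by
        ext i j
        simp [Matrix.sub_apply, Matrix.add_apply, Matrix.smul_apply]
        ring
      rw [e, frobNorm_smul hσ0]
      have h2 := frobNorm_sub_bound hθ0 hp2 hl₀
      rw [← hD₀def] at h2
      exact mul_le_mul_of_nonneg_left h2 hσ0
    have b3 : (∑ k, lam k p.2 * z k) - (∑ k, lam k ((1-σ) • p.2 + σ • l₀) * z k)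
        ≤ (m:ℝ) * (L * (σ * D₀) * eunorm z) := by
      rw [← Finset.sum_sub_distrib]
      calc (∑ k, (lam k p.2 * z k - lam k ((1-σ) • p.2 + σ • l₀) * z k))
          ≤ ∑ _k : Fin m, (L * (σ*D₀) * eunorm z) := by
            apply Finset.sum_le_sum; intro k _
            have hlip := hlam k p.2 hp2 ((1-σ) • p.2 + σ • l₀) hl'mem
            have hz := single_le_eunorm z k
            have h5 : |lam k p.2 - lam k ((1-σ) • p.2 + σ • l₀)| ≤ L * (σ*D₀) := by
              calc |lam k p.2 - lam k ((1-σ) • p.2 + σ • l₀)|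
                  ≤ L * frobNorm d (p.2 - ((1-σ) • p.2 + σ • l₀)) := hlip
                _ ≤ L * (σ*D₀) := mul_le_mul_of_nonneg_left hfrob hL0
            calc lam k p.2 * z k - lam k ((1-σ) • p.2 + σ • l₀) * z k
                = (lam k p.2 - lam k ((1-σ) • p.2 + σ • l₀)) * z k := by ring
              _ ≤ |(lam k p.2 - lam k ((1-σ) • p.2 + σ • l₀)) * z k| := le_abs_self _
              _ = |lam k p.2 - lam k ((1-σ) • p.2 + σ • l₀)| * |z k| := abs_mul _ _
              _ ≤ (L * (σ*D₀)) * eunorm z := by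
                  apply mul_le_mul h5 hz (abs_nonneg _) ?_
                  positivity
        _ = (m:ℝ) * (L * (σ*D₀) * eunorm z) := by simp [Finset.sum_const]
    have b3' : (m:ℝ)*(L*(σ*D₀)*eunorm z) ≤ (m:ℝ)*(L*((A*eunorm v)*D₀)*eunorm z) := by
      apply mul_le_mul_of_nonneg_left ?_ (Nat.cast_nonneg m)
      apply mul_le_mul_of_nonneg_right ?_ hZ0
      apply mul_le_mul_of_nonneg_left ?_ hL0
      exact mul_le_mul_of_nonneg_right hσA hD₀0
    -- combine with the constant N₀
    have hNbound : eunorm v*(2*K₀') + (A*eunorm v)*((Hbar+K+eunorm w)*(4*K₀'))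
        + (m:ℝ)*(L*((A*eunorm v)*D₀)*eunorm z)
        ≤ N₀ * eunorm v * (1 + eunorm w + eunorm z) := by
      have c1 : eunorm v * (2*K₀') ≤ 2*K₀' * (eunorm v * (1 + eunorm w + eunorm z)) := by
        nlinarith only [mul_nonneg (mul_nonneg hK₀'.le hE0) (add_nonneg hW0 hZ0)]
      have c2 : (A*eunorm v)*((Hbar+K+eunorm w)*(4*K₀'))
          ≤ (4*K₀'*A*(Hbar+K) + 4*K₀'*A) * (eunorm v * (1 + eunorm w + eunorm z)) := by
        nlinarith only [mul_nonneg (mul_nonneg (mul_nonneg hK₀'.le hA0.le)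
            (add_nonneg hHbar hK.le)) (mul_nonneg hE0 (add_nonneg hW0 hZ0)),
          mul_nonneg (mul_nonneg hK₀'.le hA0.le) (mul_nonneg hE0 hZ0),
          mul_nonneg (mul_nonneg hK₀'.le hA0.le) hE0]
      have c3 : (m:ℝ)*(L*((A*eunorm v)*D₀)*eunorm z)
          ≤ (A*L*D₀*(m:ℝ)) * (eunorm v * (1 + eunorm w + eunorm z)) := by
        nlinarith only [mul_nonneg (mul_nonneg (mul_nonneg (mul_nonneg
            (Nat.cast_nonneg m : (0:ℝ) ≤ m) hL0) hA0.le) hD₀0)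
            (mul_nonneg hE0 (by linarith : (0:ℝ) ≤ 1 + eunorm w))]
      have c4 : 0 ≤ 1 * (eunorm v * (1 + eunorm w + eunorm z)) := by positivity
      have cN : N₀ * eunorm v * (1 + eunorm w + eunorm z)
          = (2*K₀')*(eunorm v * (1 + eunorm w + eunorm z))
            + (4*K₀'*A*(Hbar+K) + 4*K₀'*A)*(eunorm v * (1 + eunorm w + eunorm z))
            + (A*L*D₀*(m:ℝ))*(eunorm v * (1 + eunorm w + eunorm z))
            + 1*(eunorm v * (1 + eunorm w + eunorm z)) := by rw [hN₀def]; ring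
      linarith only [c1, c2, c3, c4, cN]
    -- final assembly
    have hident : (Hbar+K+eunorm (w+v))*p.1
          - (Hbar+K+eunorm w)*((1-σ)*p.1 + σ*(f₀ - K₀'))
        = (eunorm (w+v) - eunorm w)*p.1
          + σ*((Hbar+K+eunorm w)*(p.1 - (f₀ - K₀'))) := by ring
    linarith only [hvle, hident, b1, b2, b3, b3', hNbound]
  -- ### interface for cHinf
  have hTbdd : ∀ w : Fin (d+1) → ℝ, BddBelow {s : ℝ | ∃ y : Matrix (Fin d) (Fin d) ℝ,
      y.IsHermitian ∧ s = Gmax d m δ K₀' Hbar K H lam w y z} := by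
    intro w
    refine ⟨-(UB w), ?_⟩
    rintro s ⟨y, hy, rfl⟩
    exact hGlow w y hy
  have hTne : ∀ w : Fin (d+1) → ℝ, Set.Nonempty {s : ℝ | ∃ y : Matrix (Fin d) (Fin d) ℝ,
      y.IsHermitian ∧ s = Gmax d m δ K₀' Hbar K H lam w y z} :=
    fun w => ⟨_, ⟨0, Matrix.isHermitian_zero, rfl⟩⟩
  have hcH : ∀ (w v : Fin (d+1) → ℝ),
      cHinf d m δ K₀' Hbar K H lam (w + v) z ≤ cHinf d m δ K₀' Hbar K H lam w z
        + N₀ * eunorm v * (1 + eunorm w + eunorm z) := by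
    intro w v
    have h1 : ∀ t ∈ {s : ℝ | ∃ y : Matrix (Fin d) (Fin d) ℝ,
        y.IsHermitian ∧ s = Gmax d m δ K₀' Hbar K H lam w y z},
        cHinf d m δ K₀' Hbar K H lam (w+v) z
          - N₀ * eunorm v * (1 + eunorm w + eunorm z) ≤ t := by
      rintro t ⟨y, hy, rfl⟩
      have h2 : cHinf d m δ K₀' Hbar K H lam (w+v) z
          ≤ Gmax d m δ K₀' Hbar K H lam (w+v) y z :=
        csInf_le (hTbdd (w+v)) ⟨y, hy, rfl⟩
      linarith only [h2, key w v y hy]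
    have h3 : cHinf d m δ K₀' Hbar K H lam (w+v) z
        - N₀ * eunorm v * (1 + eunorm w + eunorm z) ≤ cHinf d m δ K₀' Hbar K H lam w z :=
      le_csInf (hTne w) h1
    linarith only [h3]
  -- ### conclusion
  have hE0 : 0 ≤ eunorm v' := eunorm_nonneg v'
  have hW0 : 0 ≤ eunorm u' := eunorm_nonneg u'
  have hZ0 : 0 ≤ eunorm z := eunorm_nonneg z
  have h8 : 0 ≤ N₀ * eunorm v' * (1 + eunorm u' + eunorm z) :=
    mul_nonneg (mul_nonneg hN₀0.le hE0) (by linarith)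
  constructor
  · intro y hy
    linarith only [key u' v' y hy, h8]
  · rw [abs_sub_le_iff]
    constructor
    · linarith only [hcH u' v', h8]
    · have h4 := hcH (u'+v') (-v')
      rw [show u' + v' + -v' = u' from add_neg_cancel_right u' v', eunorm_neg] at h4
      have h5 : eunorm (u'+v') ≤ eunorm u' + eunorm v' := eunorm_add_le u' v'
      have h7 : 0 ≤ 1 + 2*eunorm u' + eunorm z - eunorm (u'+v') := by
        linarith only [h5, hv', hZ0, hW0]
      have h6 : N₀ * eunorm v' * (1 + eunorm (u'+v') + eunorm z)
          ≤ 2*N₀*eunorm v'*(1+eunorm u'+eunorm z) := by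
        nlinarith only [mul_nonneg (mul_nonneg hN₀0.le hE0) h7]
      linarith only [h4, h6]
end
end
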